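/- arXiv:2205.14235 — 14 statements merged into one kernel-verified Lean document; each statement's English description precedes it below -/
import Mathlib

section
/- Let A be a freezing set for the digital image (X, κ) and let F : (X, κ) → (Y, λ) be an isomorphism of digital images. Then F(A) is a freezing set for (Y, λ). -/
/-- A κ-path of some length m in S from a to b (consecutive points equal or adjacent). -/
def DigPath {α : Type*} (κ : α → α → Prop) (S : Set α) (a b : α) : Prop :=
  ∃ (m : ℕ) (r : ℕ → α), r 0 = a ∧ r m = b ∧ (∀ k, k ≤ m → r k ∈ S) ∧
    ∀ k, k < m → r k = r (k + 1) ∨ κ (r k) (r (k + 1))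

/-- S is κ-connected: any two points of S are joined by a κ-path in S. -/
def DigConnected {α : Type*} (κ : α → α → Prop) (S : Set α) : Prop :=
  ∀ a ∈ S, ∀ b ∈ S, DigPath κ S a b

/-- (κ,λ)-continuity via the adjacency characterization. -/
def DigCont {α β : Type*} (κ : α → α → Prop) (lam : β → β → Prop)
    (X : Set α) (f : α → β) : Prop :=
  ∀ x ∈ X, ∀ y ∈ X, κ x y → f x = f y ∨ lam (f x) (f y)

/-- A ⊆ X is a freezing set for (X, κ). -/
def FreezingSet {α : Type*} (κ : α → α → Prop) (X A : Set α) : Prop :=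
  A ⊆ X ∧ ∀ g : α → α, (∀ x ∈ X, g x ∈ X) → DigCont κ κ X g →
    (∀ a ∈ A, g a = a) → ∀ x ∈ X, g x = x

/-- The c_u adjacency on ℤⁿ: distinct points differing by exactly 1 in at most u
coordinates and equal in all others. -/
def cAdj (n u : ℕ) (x y : Fin n → ℤ) : Prop :=
  x ≠ y ∧ (∀ i, x i = y i ∨ |x i - y i| = 1) ∧
    (Finset.univ.filter (fun i => x i ≠ y i)).card ≤ u

/-- The boundary of A ⊆ ℤⁿ: points of A that are c_1-adjacent to a point outside A. -/
def Bd (n : ℕ) (A : Set (Fin n → ℤ)) : Set (Fin n → ℤ) :=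
  {x ∈ A | ∃ y, y ∉ A ∧ cAdj n 1 x y}

/-- A freezing set is carried to a freezing set by an isomorphism of digital images. -/
theorem freezingSet_of_iso {n m : ℕ}
    (κ : (Fin n → ℤ) → (Fin n → ℤ) → Prop) (lam : (Fin m → ℤ) → (Fin m → ℤ) → Prop)
    (X : Set (Fin n → ℤ)) (Y : Set (Fin m → ℤ)) (A : Set (Fin n → ℤ))
    (F : (Fin n → ℤ) → (Fin m → ℤ)) (G : (Fin m → ℤ) → (Fin n → ℤ))
    (hFXY : ∀ x ∈ X, F x ∈ Y) (hGYX : ∀ y ∈ Y, G y ∈ X)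
    (hF : DigCont κ lam X F) (hG : DigCont lam κ Y G)
    (hGF : ∀ x ∈ X, G (F x) = x) (hFG : ∀ y ∈ Y, F (G y) = y)
    (hA : FreezingSet κ X A) :
    FreezingSet lam Y (F '' A) := by
  obtain ⟨hAX, hfr⟩ := hA
  constructor
  · rintro y ⟨a, ha, rfl⟩
    exact hFXY a (hAX ha)
  · intro g hgY hgc hfix y hy
    have hX : ∀ x ∈ X, G (g (F x)) ∈ X := fun x hx =>
      hGYX _ (hgY _ (hFXY x hx))
    have hcont : DigCont κ κ X (fun x => G (g (F x))) := by
      intro x hx y' hy' hk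
      have hFx := hFXY x hx
      have hFy := hFXY y' hy'
      rcases hF x hx y' hy' hk with h1 | h1
      · left; show G (g (F x)) = G (g (F y')); rw [h1]
      · rcases hgc _ hFx _ hFy h1 with h2 | h2
        · left; show G (g (F x)) = G (g (F y')); rw [h2]
        · exact hG _ (hgY _ hFx) _ (hgY _ hFy) h2
    have hfixA : ∀ a ∈ A, G (g (F a)) = a := by
      intro a haA
      rw [hfix _ ⟨a, haA, rfl⟩, hGF a (hAX haA)]
    have hid := hfr _ hX hcont hfixA
    have hx : G y ∈ X := hGYX y hy
    have := hid _ hx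
    simp only [hFG y hy] at this
    have : F (G (g y)) = F (G y) := by rw [this]
    rwa [hFG _ (hgY y hy), hFG y hy] at this
end

section
/- Let (X, κ) be a digital image and f ∈ C(X, κ) a continuous self-map. Suppose x, x' are fixed points of f such that there is a unique shortest κ-path P in X from x to x'. Then every point of P is a fixed point of f. -/
/-- A κ-path of length m in X from x to x', indexed by Fin (m+1). -/
def FinPath {α : Type*} (κ : α → α → Prop) (X : Set α) (x x' : α) (m : ℕ)
    (r : Fin (m + 1) → α) : Prop :=
  r 0 = x ∧ r (Fin.last m) = x' ∧ (∀ k, r k ∈ X) ∧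
    ∀ k : Fin m, r k.castSucc = r k.succ ∨ κ (r k.castSucc) (r k.succ)

/-- If x, x' are fixed points of a continuous self-map and there is a unique shortest
κ-path P from x to x', then every point of P is fixed. -/
theorem uniqueShortestPath_fixed {α : Type*} (κ : α → α → Prop) (X : Set α)
    (f : α → α) (hfX : ∀ x ∈ X, f x ∈ X) (hf : DigCont κ κ X f)
    (x x' : α) (hx : x ∈ X) (hx' : x' ∈ X) (hfx : f x = x) (hfx' : f x' = x')
    (m : ℕ) (r : Fin (m + 1) → α) (hr : FinPath κ X x x' m r)
    (hshort : ∀ m' < m, ¬∃ r' : Fin (m' + 1) → α, FinPath κ X x x' m' r')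
    (huniq : ∀ r' : Fin (m + 1) → α, FinPath κ X x x' m r' → r' = r) :
    ∀ k, f (r k) = r k := by
  have h : FinPath κ X x x' m (fun k => f (r k)) := by
    obtain ⟨h0, hl, hmem, hadj⟩ := hr
    refine ⟨by simp [h0, hfx], by simp [hl, hfx'], fun k => hfX _ (hmem k), fun k => ?_⟩
    rcases hadj k with h | h
    · left; simp [h]
    · exact hf _ (hmem _) _ (hmem _) h
  have := huniq _ h
  intro k
  exact congrFun this k
end

section
/- Let (X, c_u) ⊆ ℤⁿ be a digital image, 1 ≤ u ≤ n, let q, q' ∈ X with q c_u-adjacent to q', and let f ∈ C(X, c_u). If for some coordinate index i we have p_i(f(q)) > p_i(q) > p_i(q'), then p_i(f(q')) > p_i(q'). Similarly, if p_i(f(q)) < p_i(q) < p_i(q'), then p_i(f(q')) < p_i(q'). -/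
/-- Pulling lemma: a c_u-continuous map that moves a point also moves the point
behind it, coordinatewise. -/
theorem c_u_pulling {n u : ℕ} (hu1 : 1 ≤ u) (hun : u ≤ n) (X : Set (Fin n → ℤ))
    (f : (Fin n → ℤ) → (Fin n → ℤ)) (hfX : ∀ x ∈ X, f x ∈ X)
    (hf : DigCont (cAdj n u) (cAdj n u) X f)
    (q q' : Fin n → ℤ) (hq : q ∈ X) (hq' : q' ∈ X) (hadj : cAdj n u q q')
    (i : Fin n) :
    (f q i > q i → q i > q' i → f q' i > q' i) ∧
      (f q i < q i → q i < q' i → f q' i < q' i) := by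
  have hqd : |q i - q' i| ≤ 1 := by
    rcases hadj.2.1 i with h | h
    · simp [h]
    · exact le_of_eq h
  have hfd : |f q i - f q' i| ≤ 1 := by
    rcases hf q hq q' hq' hadj with h | h
    · simp [h]
    · rcases h.2.1 i with h' | h'
      · simp [h']
      · exact le_of_eq h'
  rw [abs_le] at hqd hfd
  constructor <;> intro h1 h2 <;> omega
end

section
/- Let X = ∏_{i=1}^{3} [a_i, b_i] ∩ ℤ³ be a digital cube with b_i > a_i + 1 for all i, and let A = ∏_{i=1}^{3} {a_i, b_i} be its set of corners. Then A is a subset of every freezing set for (X, c_3). -/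
/-- The corners of a 3-dimensional digital cube with all edges of length > 1 belong
to every freezing set for (X, c_3). -/
theorem corners_subset_freezingSet_c3 (a b : Fin 3 → ℤ) (hab : ∀ i, a i + 1 < b i)
    (X : Set (Fin 3 → ℤ)) (hX : X = {x | ∀ i, a i ≤ x i ∧ x i ≤ b i})
    (A : Set (Fin 3 → ℤ)) (hA : A = {x | ∀ i, x i = a i ∨ x i = b i})
    (B : Set (Fin 3 → ℤ)) (hB : FreezingSet (cAdj 3 3) X B) :
    A ⊆ B := by
  intro q hq
  by_contra hqB
  have hqA : ∀ i, q i = a i ∨ q i = b i := by rw [hA] at hq; exact hq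
  have habs : ∀ z : ℤ, |z| = 1 ↔ z = 1 ∨ z = -1 := fun z => abs_eq (by norm_num)
  set q' : Fin 3 → ℤ := fun i => if q i = a i then a i + 1 else b i - 1 with hq'def
  have hq'X : q' ∈ X := by
    rw [hX]; intro i; have := hab i; simp only [hq'def]; split <;> omega
  have hqX : q ∈ X := by
    rw [hX]; intro i; have := hab i; rcases hqA i with h | h <;> omega
  have hq'ne : ∀ i, q' i ≠ q i := by
    intro i; have := hab i; simp only [hq'def]
    rcases hqA i with h | h <;> split <;> omega
  -- key: any point of X each of whose coords differs from q by ≤ 1 is coord-close to q'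
  have hclose : ∀ x : Fin 3 → ℤ, x ∈ X → (∀ i, x i = q i ∨ |x i - q i| = 1) →
      ∀ i, x i = q' i ∨ |x i - q' i| = 1 := by
    intro x hx hc i
    rw [hX] at hx
    have h1 := hx i
    have h2 := hc i
    have h3 := hab i
    simp only [habs] at h2 ⊢
    simp only [hq'def]
    rcases hqA i with h | h
    · rw [if_pos h]; omega
    · have : ¬ q i = a i := by omega
      rw [if_neg this]; omega
  have hcard : ∀ (x y : Fin 3 → ℤ),
      (Finset.univ.filter (fun i => x i ≠ y i)).card ≤ 3 := by
    intro x y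
    exact le_trans (Finset.card_filter_le _ _) (by simp)
  set g : (Fin 3 → ℤ) → (Fin 3 → ℤ) := fun x => if x = q then q' else x with hgdef
  have hmaps : ∀ x ∈ X, g x ∈ X := by
    intro x hx; simp only [hgdef]; split
    · exact hq'X
    · exact hx
  have hadjq' : ∀ y : Fin 3 → ℤ, y ∈ X → cAdj 3 3 q y → q' = y ∨ cAdj 3 3 q' y := by
    intro y hy ⟨hne, hco, _⟩
    by_cases h : q' = y
    · exact Or.inl h
    · refine Or.inr ⟨h, ?_, hcard _ _⟩
      intro i
      have := hclose y hy (fun i => by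
        rcases hco i with h | h
        · exact Or.inl h.symm
        · exact Or.inr (by rw [abs_sub_comm] at h; exact h)) i
      rcases this with h | h
      · exact Or.inl h.symm
      · exact Or.inr (by rw [abs_sub_comm] at h; exact h)
  have hcont : DigCont (cAdj 3 3) (cAdj 3 3) X g := by
    intro x hx y hy hadj
    by_cases hxq : x = q <;> by_cases hyq : y = q
    · exact absurd (hxq.trans hyq.symm) hadj.1
    · simp only [hgdef, if_pos hxq, if_neg hyq]
      subst hxq
      exact hadjq' y hy hadj
    · simp only [hgdef, if_neg hxq, if_pos hyq]
      rw [hyq] at hadj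
      have hsym : cAdj 3 3 q x := by
        obtain ⟨hne, hco, hc⟩ := hadj
        refine ⟨fun h => hne h.symm, fun i => ?_, hcard _ _⟩
        rcases hco i with h | h
        · exact Or.inl h.symm
        · exact Or.inr (by rw [abs_sub_comm] at h; exact h)
      rcases hadjq' x hx hsym with h | ⟨hne, hco, hc⟩
      · exact Or.inl h.symm
      · refine Or.inr ⟨fun h => hne h.symm, fun i => ?_, hcard _ _⟩
        rcases hco i with h | h
        · exact Or.inl h.symm
        · exact Or.inr (by rw [abs_sub_comm] at h; exact h)
    · simp only [hgdef, if_neg hxq, if_neg hyq]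
      exact Or.inr hadj
  have hfix : ∀ c ∈ B, g c = c := by
    intro c hc
    simp only [hgdef]
    rw [if_neg]
    intro h; exact hqB (h ▸ hc)
  have := hB.2 g hmaps hcont hfix q hqX
  simp only [hgdef, if_pos rfl] at this
  exact hq'ne 0 (congrFun this 0)
end

section
/- Each corner point a of the digital cube X = ∏_{i=1}^{3} [0, b_i] ∩ ℤ³ with b_i ≥ 2 for all i has a close c_3-neighbor in X, namely the unique point of X differing from a by exactly 1 in every coordinate. -/
/-- Each corner of a digital cube in ℤ³ with all b_i ≥ 2 has a close c_3-neighbor,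
namely the unique point of X differing from it by exactly 1 in every coordinate. -/
theorem corner_has_close_c3_neighbor (b : Fin 3 → ℤ) (hb : ∀ i, 2 ≤ b i)
    (X : Set (Fin 3 → ℤ)) (hX : X = {x | ∀ i, 0 ≤ x i ∧ x i ≤ b i})
    (a : Fin 3 → ℤ) (ha : ∀ i, a i = 0 ∨ a i = b i) :
    ∃ q ∈ X, (∀ i, |q i - a i| = 1) ∧
      (∀ q' ∈ X, (∀ i, |q' i - a i| = 1) → q' = q) ∧
      cAdj 3 3 a q ∧
      {y ∈ X | cAdj 3 3 a y} ⊆ {y ∈ X | cAdj 3 3 q y} ∪ {q} := by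
  subst hX
  set q : Fin 3 → ℤ := fun i => if a i = 0 then 1 else b i - 1 with hq
  have hqc : ∀ i, (a i = 0 ∧ q i = 1) ∨ (a i = b i ∧ q i = b i - 1) := by
    intro i
    rcases ha i with h | h
    · left; exact ⟨h, by simp [hq, h]⟩
    · right
      refine ⟨h, ?_⟩
      have hne : a i ≠ 0 := by have := hb i; omega
      simp [hq, hne]
  have hqd : ∀ i, |q i - a i| = 1 := by
    intro i
    have := hb i
    rcases hqc i with ⟨h1, h2⟩ | ⟨h1, h2⟩ <;>
      rcases abs_cases (q i - a i) with ⟨e, _⟩ | ⟨e, _⟩ <;> omega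
  have hqX : q ∈ {x : Fin 3 → ℤ | ∀ i, 0 ≤ x i ∧ x i ≤ b i} := by
    intro i
    have := hb i
    rcases hqc i with ⟨h1, h2⟩ | ⟨h1, h2⟩ <;> omega
  refine ⟨q, hqX, hqd, ?_, ?_, ?_⟩
  · intro q' hq' hd
    funext i
    have h1 := hq' i
    have h2 := hd i
    have h3 := hb i
    rcases abs_cases (q' i - a i) with ⟨e, _⟩ | ⟨e, _⟩ <;>
      rcases hqc i with ⟨g1, g2⟩ | ⟨g1, g2⟩ <;> omega
  · refine ⟨?_, ?_, ?_⟩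
    · intro h
      have := hqd 0
      rw [← h] at this
      simp at this
    · intro i
      right
      rw [abs_sub_comm]
      exact hqd i
    · calc (Finset.univ.filter (fun i => a i ≠ q i)).card ≤ Finset.univ.card :=
            Finset.card_filter_le _ _
        _ = 3 := by simp
  · rintro y ⟨hyX, hya⟩
    by_cases hyq : y = q
    · right; simp [hyq]
    · left
      refine ⟨hyX, ?_, ?_, ?_⟩
      · exact fun h => hyq (h.symm)
      · intro i
        have h1 := hyX i
        have h2 := hya.2.1 i
        have h3 := hb i
        have h4 := hqd i
        rcases h2 with h2 | h2 <;>
          rcases abs_cases (q i - y i) with ⟨e2, _⟩ | ⟨e2, _⟩ <;>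
          rcases abs_cases (a i - y i) with ⟨e, _⟩ | ⟨e, _⟩ <;>
          rcases hqc i with ⟨g1, g2⟩ | ⟨g1, g2⟩ <;> omega
      · calc (Finset.univ.filter (fun i => q i ≠ y i)).card ≤ Finset.univ.card :=
            Finset.card_filter_le _ _
          _ = 3 := by simp
end

section
/- Let X = ∏_{i=1}^{n} [r_i, s_i] ∩ ℤⁿ and Y = ∏_{i=1}^{n} [a_i, b_i] ∩ ℤⁿ with [r_i, s_i] ⊆ [a_i, b_i] for all i. Let A = ∏_{i=1}^{n} {r_i, s_i} be the set of corners of X. If f : X → Y is c_1-continuous and fixes every point of A, then f fixes every point of X. -/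
lemma adj_single {n : ℕ} (i : Fin n) (x y : Fin n → ℤ)
    (h : ∀ j, j ≠ i → x j = y j) (hi : (x i - y i).natAbs = 1) : cAdj n 1 x y := by
  refine ⟨?_, ?_, ?_⟩
  · intro he; rw [he] at hi; simp at hi
  · intro j
    by_cases hj : j = i
    · subst hj; right
      rw [Int.abs_eq_natAbs, hi]; rfl
    · left; exact h j hj
  · have hsub : (Finset.univ.filter (fun j => x j ≠ y j)) ⊆ {i} := by
      intro j hj
      simp only [Finset.mem_filter] at hj
      simp only [Finset.mem_singleton]
      by_contra hji
      exact hj.2 (h j hji)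
    calc (Finset.univ.filter (fun j => x j ≠ y j)).card
        ≤ ({i} : Finset (Fin n)).card := Finset.card_le_card hsub
      _ = 1 := Finset.card_singleton i

lemma adj_l1 {n : ℕ} {x y : Fin n → ℤ} (h : cAdj n 1 x y) :
    ∑ j, (x j - y j).natAbs = 1 := by
  obtain ⟨hne, hco, hcard⟩ := h
  obtain ⟨i, hi⟩ : ∃ i, x i ≠ y i := by
    by_contra hc; push_neg at hc; exact hne (funext hc)
  have hone := Finset.card_le_one.mp hcard
  have hfil : Finset.univ.filter (fun j => x j ≠ y j) = {i} := by
    ext j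
    simp only [Finset.mem_filter, Finset.mem_univ, true_and, Finset.mem_singleton]
    constructor
    · intro hj
      exact hone j (by simp [hj]) i (by simp [hi])
    · rintro rfl; exact hi
  have hsum : ∑ j ∈ Finset.univ.filter (fun j => x j ≠ y j), (x j - y j).natAbs
      = ∑ j, (x j - y j).natAbs := by
    apply Finset.sum_subset (Finset.subset_univ _)
    intro j _ hj
    simp only [Finset.mem_filter, Finset.mem_univ, true_and, not_not] at hj
    simp [hj]
  rw [← hsum, hfil, Finset.sum_singleton]
  rcases hco i with h0 | h1
  · exact absurd h0 hi
  · rw [Int.abs_eq_natAbs] at h1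
    exact_mod_cast h1

lemma seg_fix {n : ℕ} (X : Set (Fin n → ℤ)) (f : (Fin n → ℤ) → (Fin n → ℤ))
    (hf : DigCont (cAdj n 1) (cAdj n 1) X f)
    (i : Fin n) (p : Fin n → ℤ) (d : ℕ)
    (hmem : ∀ k : ℕ, k ≤ d → (fun j => if j = i then p i + (k:ℤ) else p j) ∈ X)
    (hp : f p = p)
    (hq : f (fun j => if j = i then p i + (d:ℤ) else p j)
        = fun j => if j = i then p i + (d:ℤ) else p j) :
    ∀ k : ℕ, k ≤ d →
      f (fun j => if j = i then p i + (k:ℤ) else p j)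
        = fun j => if j = i then p i + (k:ℤ) else p j := by
  set pt : ℕ → Fin n → ℤ := fun k j => if j = i then p i + (k:ℤ) else p j with hptdef
  have hpt0 : pt 0 = p := by
    funext j; by_cases hj : j = i <;> simp [pt, hj]
  have hadj : ∀ m : ℕ, cAdj n 1 (pt m) (pt (m+1)) := by
    intro m
    apply adj_single i
    · intro j hj; simp [pt, hj]
    · simp only [pt, if_pos rfl]
      push_cast
      omega
  have hchain : ∀ k t : ℕ, k + t ≤ d →
      ∑ j, (f (pt k) j - f (pt (k+t)) j).natAbs ≤ t := by
    intro k t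
    induction t with
    | zero => intro _; simp
    | succ t ih =>
      intro hle
      have h1 : ∑ j, (f (pt (k+t)) j - f (pt (k+t+1)) j).natAbs ≤ 1 := by
        rcases hf (pt (k+t)) (hmem _ (by omega)) (pt (k+t+1)) (hmem _ (by omega))
            (hadj (k+t)) with he | ha
        · simp [he]
        · exact le_of_eq (adj_l1 ha)
      have hkt : k + (t+1) = k + t + 1 := by ring
      calc ∑ j, (f (pt k) j - f (pt (k+(t+1))) j).natAbs
          ≤ ∑ j, ((f (pt k) j - f (pt (k+t)) j).natAbs
              + (f (pt (k+t)) j - f (pt (k+t+1)) j).natAbs) := by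
            apply Finset.sum_le_sum; intro j _
            rw [hkt]
            omega
        _ = (∑ j, (f (pt k) j - f (pt (k+t)) j).natAbs)
            + ∑ j, (f (pt (k+t)) j - f (pt (k+t+1)) j).natAbs := Finset.sum_add_distrib
        _ ≤ t + 1 := by have := ih (by omega); omega
  intro k hk
  have hA : ∑ j, (f (pt k) j - p j).natAbs ≤ k := by
    have h := hchain 0 k (by omega)
    rw [zero_add, hpt0, hp] at h
    calc ∑ j, (f (pt k) j - p j).natAbs
        = ∑ j, (p j - f (pt k) j).natAbs := by
          apply Finset.sum_congr rfl; intro j _; omega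
      _ ≤ k := h
  have hB : ∑ j, (f (pt k) j - pt d j).natAbs ≤ d - k := by
    have h := hchain k (d - k) (by omega)
    have hkd : k + (d - k) = d := by omega
    rw [hkd, hq] at h
    exact h
  set u := f (pt k) with hu
  have hqj : ∀ j, j ≠ i → pt d j = p j := by intro j hj; simp [pt, hj]
  have hqi : pt d i = p i + (d:ℤ) := by simp [pt]
  have htri : ∀ j, (p j - pt d j).natAbs ≤ (u j - p j).natAbs + (u j - pt d j).natAbs := by
    intro j; omega
  have hd : ∑ j, (p j - pt d j).natAbs = d := by
    rw [Finset.sum_eq_single i]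
    · rw [hqi]; omega
    · intro j _ hj; rw [hqj j hj]; omega
    · intro h; exact absurd (Finset.mem_univ i) h
  have hsum2 : ∑ j, ((u j - p j).natAbs + (u j - pt d j).natAbs) ≤ d := by
    rw [Finset.sum_add_distrib]; omega
  have hsums : ∑ j, (p j - pt d j).natAbs
      = ∑ j, ((u j - p j).natAbs + (u j - pt d j).natAbs) := by
    have h1 : ∑ j, (p j - pt d j).natAbs
        ≤ ∑ j, ((u j - p j).natAbs + (u j - pt d j).natAbs) :=
      Finset.sum_le_sum (fun j _ => htri j)
    omega
  have heq : ∀ j, (p j - pt d j).natAbs = (u j - p j).natAbs + (u j - pt d j).natAbs :=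
    fun j => (Finset.sum_eq_sum_iff_of_le (fun j _ => htri j)).mp hsums j (Finset.mem_univ j)
  have hoff : ∀ j, j ≠ i → u j = p j := by
    intro j hj
    have h1 := heq j
    rw [hqj j hj] at h1
    omega
  have hai : (u i - p i).natAbs ≤ k := by
    have : (u i - p i).natAbs ≤ ∑ j, (u j - p j).natAbs :=
      Finset.single_le_sum (f := fun j => (u j - p j).natAbs)
        (fun j _ => Nat.zero_le _) (Finset.mem_univ i)
    omega
  have hbi : (u i - pt d i).natAbs ≤ d - k := by
    have : (u i - pt d i).natAbs ≤ ∑ j, (u j - pt d j).natAbs :=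
      Finset.single_le_sum (f := fun j => (u j - pt d j).natAbs)
        (fun j _ => Nat.zero_le _) (Finset.mem_univ i)
    omega
  have hii := heq i
  rw [hqi] at hii hbi
  have hui : u i = p i + (k:ℤ) := by omega
  funext j
  by_cases hj : j = i
  · subst hj; simpa using hui
  · rw [if_neg hj]; exact hoff j hj
/-- If a c_1-continuous map from a digital cube X into a larger cube Y fixes the
corners of X, then it fixes every point of X. -/
theorem cornersFreeze_into_larger_cube {n : ℕ} (r s a b : Fin n → ℤ)
    (hrs : ∀ i, r i ≤ s i) (har : ∀ i, a i ≤ r i) (hsb : ∀ i, s i ≤ b i)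
    (X : Set (Fin n → ℤ)) (hX : X = {x | ∀ i, r i ≤ x i ∧ x i ≤ s i})
    (Y : Set (Fin n → ℤ)) (hY : Y = {x | ∀ i, a i ≤ x i ∧ x i ≤ b i})
    (A : Set (Fin n → ℤ)) (hA : A = {x | ∀ i, x i = r i ∨ x i = s i})
    (f : (Fin n → ℤ) → (Fin n → ℤ)) (hfXY : ∀ x ∈ X, f x ∈ Y)
    (hf : DigCont (cAdj n 1) (cAdj n 1) X f)
    (hfix : ∀ x ∈ A, f x = x) :
    ∀ x ∈ X, f x = x := by

  subst hX hY hA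
  suffices H : ∀ N : ℕ, ∀ x : Fin n → ℤ, (∀ i, r i ≤ x i ∧ x i ≤ s i) →
      (Finset.univ.filter (fun i => x i ≠ r i ∧ x i ≠ s i)).card ≤ N → f x = x by
    intro x hx
    exact H _ x hx le_rfl
  intro N
  induction N with
  | zero =>
    intro x hx hcard
    apply hfix
    intro i
    by_contra hi
    push_neg at hi
    have hmem : i ∈ Finset.univ.filter (fun i => x i ≠ r i ∧ x i ≠ s i) := by
      simp [hi.1, hi.2]
    have := Finset.card_pos.mpr ⟨i, hmem⟩
    omega
  | succ N ih =>
    intro x hx hcard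
    by_cases hall : ∀ i, x i = r i ∨ x i = s i
    · exact hfix x hall
    push_neg at hall
    obtain ⟨i, hi1, hi2⟩ := hall
    have hiF : i ∈ Finset.univ.filter (fun j => x j ≠ r j ∧ x j ≠ s j) := by
      simp [hi1, hi2]
    -- generic fact: replacing coordinate i by a corner value keeps us in X with smaller measure
    have hrepl : ∀ v : ℤ, v = r i ∨ v = s i →
        f (fun j => if j = i then v else x j) = (fun j => if j = i then v else x j) := by
      intro v hv
      apply ih
      · intro j
        by_cases hj : j = i
        · subst hj; simp only [if_pos rfl]
          rcases hv with rfl | rfl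
          · exact ⟨le_rfl, hrs j⟩
          · exact ⟨hrs j, le_rfl⟩
        · simp only [if_neg hj]; exact hx j
      · have hsub : (Finset.univ.filter
            (fun j => (if j = i then v else x j) ≠ r j ∧ (if j = i then v else x j) ≠ s j))
            ⊆ (Finset.univ.filter (fun j => x j ≠ r j ∧ x j ≠ s j)).erase i := by
          intro j hj
          simp only [Finset.mem_filter, Finset.mem_univ, true_and] at hj
          by_cases hji : j = i
          · subst hji
            simp only [if_pos rfl] at hj
            rcases hv with rfl | rfl
            · exact absurd rfl hj.1
            · exact absurd rfl hj.2
          · rw [if_neg hji] at hj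
            exact Finset.mem_erase.mpr ⟨hji, by simp [hj.1, hj.2]⟩
        have := Finset.card_le_card hsub
        rw [Finset.card_erase_of_mem hiF] at this
        omega
    set d : ℕ := (s i - r i).toNat with hd
    have hdi : (d : ℤ) = s i - r i := Int.toNat_of_nonneg (by have := hrs i; omega)
    set p : Fin n → ℤ := fun j => if j = i then r i else x j with hpdef
    have hpi : p i = r i := by simp [p]
    have hmem : ∀ k : ℕ, k ≤ d → (fun j => if j = i then p i + (k:ℤ) else p j)
        ∈ {x : Fin n → ℤ | ∀ i, r i ≤ x i ∧ x i ≤ s i} := by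
      intro k hk j
      by_cases hj : j = i
      · subst hj
        simp only [if_pos rfl, hpi]
        have : (k : ℤ) ≤ (d : ℤ) := by exact_mod_cast hk
        constructor <;> omega
      · simp only [if_neg hj, p]
        exact hx j
    have hp : f p = p := hrepl (r i) (Or.inl rfl)
    have hqeq : (fun j => if j = i then p i + (d:ℤ) else p j)
        = (fun j => if j = i then s i else x j) := by
      funext j
      by_cases hj : j = i
      · subst hj; simp [p]; omega
      · simp [p, hj]
    have hq : f (fun j => if j = i then p i + (d:ℤ) else p j)
        = (fun j => if j = i then p i + (d:ℤ) else p j) := by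
      rw [hqeq]; exact hrepl (s i) (Or.inr rfl)
    set k : ℕ := (x i - r i).toNat with hkdef
    have hki : (k : ℤ) = x i - r i := Int.toNat_of_nonneg (by have := (hx i).1; omega)
    have hkd : k ≤ d := by
      have h1 := (hx i).2
      omega
    have hxeq : (fun j => if j = i then p i + (k:ℤ) else p j) = x := by
      funext j
      by_cases hj : j = i
      · subst hj; simp [p]; omega
      · simp [p, hj]
    have := seg_fix _ f hf i p d hmem hp hq k hkd
    rw [hxeq] at this
    exact this
end

section
/- Let X = ∏_{i=1}^{n} [r_i, s_i] ∩ ℤⁿ be a digital cube. Then its corner set A = ∏_{i=1}^{n} {r_i, s_i} is a freezing set for (X, c_1). -/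
/-- ℓ¹ distance on ℤⁿ (as a natural number). -/
def d1 {n : ℕ} (x y : Fin n → ℤ) : ℕ := ∑ i, (x i - y i).natAbs

lemma d1_self {n : ℕ} (x : Fin n → ℤ) : d1 x x = 0 := by
  simp [d1]

lemma d1_eq_zero {n : ℕ} {x y : Fin n → ℤ} (h : d1 x y = 0) : x = y := by
  funext i
  have := Finset.sum_eq_zero_iff.mp h i (Finset.mem_univ i)
  omega

lemma d1_split {n : ℕ} (i : Fin n) (x y : Fin n → ℤ) :
    d1 x y = (x i - y i).natAbs + ∑ j ∈ Finset.univ.erase i, (x j - y j).natAbs := by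
  rw [d1, ← Finset.add_sum_erase _ _ (Finset.mem_univ i)]

lemma d1_triangle {n : ℕ} (x y z : Fin n → ℤ) : d1 x z ≤ d1 x y + d1 y z := by
  rw [d1, d1, d1, ← Finset.sum_add_distrib]
  exact Finset.sum_le_sum fun i _ => by omega

lemma d1_le_one_of_adj {n : ℕ} {x y : Fin n → ℤ} (h : cAdj n 1 x y) : d1 x y ≤ 1 := by
  obtain ⟨-, h1, h2⟩ := h
  have e : d1 x y = ∑ i ∈ Finset.univ.filter (fun i => x i ≠ y i), (x i - y i).natAbs := by
    rw [d1]
    refine (Finset.sum_subset (Finset.filter_subset _ _) ?_).symm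
    intro i _ hi
    simp only [Finset.mem_filter, Finset.mem_univ, true_and, not_not] at hi
    omega
  rw [e]
  calc ∑ i ∈ Finset.univ.filter (fun i => x i ≠ y i), (x i - y i).natAbs
      ≤ ∑ _i ∈ Finset.univ.filter (fun i => x i ≠ y i), 1 := by
        refine Finset.sum_le_sum fun i hi => ?_
        simp only [Finset.mem_filter] at hi
        rcases h1 i with h | h
        · exact absurd h hi.2
        · rw [Int.abs_eq_natAbs] at h; exact_mod_cast h.le
    _ = (Finset.univ.filter (fun i => x i ≠ y i)).card := by simp
    _ ≤ 1 := h2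

/-- A c₁-continuous self-map of the cube is ℓ¹-nonexpansive. -/
lemma nonexp {n : ℕ} (r s : Fin n → ℤ) (g : (Fin n → ℤ) → Fin n → ℤ)
    (hc : DigCont (cAdj n 1) (cAdj n 1) {x | ∀ i, r i ≤ x i ∧ x i ≤ s i} g) :
    ∀ m : ℕ, ∀ a b : Fin n → ℤ, (∀ i, r i ≤ a i ∧ a i ≤ s i) →
      (∀ i, r i ≤ b i ∧ b i ≤ s i) → d1 a b ≤ m → d1 (g a) (g b) ≤ m := by
  intro m
  induction m with
  | zero =>
    intro a b _ _ hd
    have : a = b := d1_eq_zero (Nat.le_zero.mp hd)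
    subst this
    simp [d1_self]
  | succ m ih =>
    intro a b ha hb hd
    by_cases hab : a = b
    · subst hab; simp [d1_self]
    · have : ∃ i, a i ≠ b i := by
        by_contra h
        push_neg at h
        exact hab (funext h)
      obtain ⟨i, hi⟩ := this
      set v : ℤ := if a i < b i then a i + 1 else a i - 1 with hv
      set a' : Fin n → ℤ := Function.update a i v with ha'def
      have ha'i : a' i = v := Function.update_self i v a
      have ha'j : ∀ j, j ≠ i → a' j = a j := fun j hj => Function.update_of_ne hj v a
      have ha' : ∀ j, r j ≤ a' j ∧ a' j ≤ s j := by
        intro j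
        by_cases hj : j = i
        · subst hj
          rw [ha'i]
          have h1 := ha j; have h2 := hb j
          simp only [hv]
          split <;> omega
        · rw [ha'j j hj]; exact ha j
      have hadj : cAdj n 1 a a' := by
        refine ⟨?_, ?_, ?_⟩
        · intro h
          have := congrFun h i
          rw [ha'i] at this
          simp only [hv] at this
          split at this <;> omega
        · intro j
          by_cases hj : j = i
          · subst hj
            right
            rw [ha'i]
            simp only [hv]
            split <;> simp
          · left; rw [ha'j j hj]
        · have hsub : Finset.univ.filter (fun j => a j ≠ a' j) ⊆ {i} := by
            intro j hj
            simp only [Finset.mem_filter, Finset.mem_univ, true_and] at hj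
            simp only [Finset.mem_singleton]
            by_contra hji
            exact hj (ha'j j hji).symm
          calc _ ≤ ({i} : Finset (Fin n)).card := Finset.card_le_card hsub
            _ = 1 := Finset.card_singleton i
      have hstep : d1 (g a) (g a') ≤ 1 := by
        rcases hc a ha a' ha' hadj with h | h
        · rw [h]; simp [d1_self]
        · exact d1_le_one_of_adj h
      have hd' : d1 a' b ≤ m := by
        have key : d1 a b = d1 a' b + 1 := by
          rw [d1_split i, d1_split i]
          have he : ∑ j ∈ Finset.univ.erase i, (a j - b j).natAbs
              = ∑ j ∈ Finset.univ.erase i, (a' j - b j).natAbs := by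
            refine Finset.sum_congr rfl fun j hj => ?_
            rw [ha'j j (Finset.ne_of_mem_erase hj)]
          rw [he, ha'i]
          simp only [hv]
          split <;> omega
        omega
      have := ih a' b ha' hb hd'
      calc d1 (g a) (g b) ≤ d1 (g a) (g a') + d1 (g a') (g b) := d1_triangle _ _ _
        _ ≤ 1 + m := Nat.add_le_add hstep this
        _ = m + 1 := by omega

/-- The corner set of a digital cube is a freezing set for (X, c_1). -/
theorem corners_freezingSet_c1 {n : ℕ} (r s : Fin n → ℤ) (hrs : ∀ i, r i ≤ s i)
    (X : Set (Fin n → ℤ)) (hX : X = {x | ∀ i, r i ≤ x i ∧ x i ≤ s i})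
    (A : Set (Fin n → ℤ)) (hA : A = {x | ∀ i, x i = r i ∨ x i = s i}) :
    FreezingSet (cAdj n 1) X A := by
  subst hX; subst hA
  have memX : ∀ c : Fin n → ℤ, (∀ i, c i = r i ∨ c i = s i) →
      (∀ i, r i ≤ c i ∧ c i ≤ s i) := by
    intro c hc i
    rcases hc i with h | h
    · rw [h]; exact ⟨le_refl _, hrs i⟩
    · rw [h]; exact ⟨hrs i, le_refl _⟩
  constructor
  · intro c hc
    exact memX c hc
  · intro g hgX hgcont hfix x hx
    simp only [Set.mem_setOf_eq] at hx
    have hy : ∀ i, r i ≤ g x i ∧ g x i ≤ s i := hgX x hx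
    -- key equality: distance to each corner is preserved
    have key : ∀ c : Fin n → ℤ, (∀ i, c i = r i ∨ c i = s i) → d1 (g x) c = d1 x c := by
      intro c hcA
      have hcX := memX c hcA
      set c' : Fin n → ℤ := fun i => r i + s i - c i with hc'def
      have hc'v : ∀ i, c' i = r i + s i - c i := fun i => rfl
      have hc'A : ∀ i, c' i = r i ∨ c' i = s i := by
        intro i
        rcases hcA i with h | h
        · right; rw [hc'v i, h]; ring
        · left; rw [hc'v i, h]; ring
      have hc'X := memX c' hc'A
      have hfc : g c = c := hfix c hcA
      have hfc' : g c' = c' := hfix c' hc'A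
      have e1 : d1 (g x) c ≤ d1 x c := by
        have := nonexp r s g hgcont (d1 x c) x c hx hcX (le_refl _)
        rwa [hfc] at this
      have e2 : d1 (g x) c' ≤ d1 x c' := by
        have := nonexp r s g hgcont (d1 x c') x c' hx hc'X (le_refl _)
        rwa [hfc'] at this
      have hsum : ∀ z : Fin n → ℤ, (∀ i, r i ≤ z i ∧ z i ≤ s i) →
          d1 z c + d1 z c' = ∑ i, (s i - r i).natAbs := by
        intro z hz
        rw [d1, d1, ← Finset.sum_add_distrib]
        refine Finset.sum_congr rfl fun i _ => ?_
        have h1 := hz i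
        have h2 := hrs i
        rw [hc'v i]
        rcases hcA i with h | h <;> omega
      have s1 := hsum x hx
      have s2 := hsum (g x) hy
      omega
    funext i
    have h1 := key r (fun j => Or.inl rfl)
    have h2 := key (Function.update r i (s i)) (fun j => by
      by_cases hj : j = i
      · right; rw [hj]; exact Function.update_self i (s i) r
      · left; exact Function.update_of_ne hj _ r)
    rw [d1_split i (g x) r, d1_split i x r] at h1
    rw [d1_split i (g x) _, d1_split i x _] at h2
    have hui : Function.update r i (s i) i = s i := Function.update_self i (s i) r
    have hue : ∀ z : Fin n → ℤ,
        ∑ j ∈ Finset.univ.erase i, (z j - Function.update r i (s i) j).natAbs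
          = ∑ j ∈ Finset.univ.erase i, (z j - r j).natAbs := by
      intro z
      refine Finset.sum_congr rfl fun j hj => ?_
      rw [Function.update_of_ne (Finset.ne_of_mem_erase hj)]
    rw [hui, hue, hue] at h2
    have b1 := hx i
    have b2 := hy i
    omega
end

section
/- For n ∈ {1, 2}, the corner set A = ∏_{i=1}^{n} {r_i, s_i} of the digital cube X = ∏_{i=1}^{n} [r_i, s_i] ∩ ℤⁿ (with s_i > r_i) is a minimal freezing set for (X, c_1): A is a freezing set and no proper subset of A is a freezing set. -/
lemma seg_lemma {n : ℕ} {X : Set (Fin n → ℤ)} {g : (Fin n → ℤ) → (Fin n → ℤ)}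
    (hg : DigCont (cAdj n 1) (cAdj n 1) X g)
    (i : Fin n) (m : ℕ) (p : ℕ → Fin n → ℤ)
    (hstep : ∀ k < m, p (k+1) i = p k i + 1 ∧ ∀ j, j ≠ i → p (k+1) j = p k j)
    (hpX : ∀ k ≤ m, p k ∈ X)
    (hend : g (p m) i = g (p 0) i + m) :
    ∀ k ≤ m, (g (p k) i = g (p 0) i + k) ∧ ∀ j, j ≠ i → g (p k) j = g (p 0) j := by
  -- adjacency of consecutive points
  have hadj : ∀ k < m, cAdj n 1 (p k) (p (k+1)) := by
    intro k hk
    obtain ⟨hi, hj⟩ := hstep k hk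
    refine ⟨?_, ?_, ?_⟩
    · intro h
      have := congrFun h i
      omega
    · intro j
      by_cases hji : j = i
      · subst hji; right; rw [hi]; simp
      · left; rw [hj j hji]
    · have hsub : (Finset.univ.filter (fun j => p k j ≠ p (k+1) j)) ⊆ {i} := by
        intro j hjmem
        simp only [Finset.mem_filter, Finset.mem_univ, true_and] at hjmem
        simp only [Finset.mem_singleton]
        by_contra hji
        exact hjmem (hj j hji).symm
      calc (Finset.univ.filter (fun j => p k j ≠ p (k+1) j)).card
          ≤ ({i} : Finset (Fin n)).card := Finset.card_le_card hsub
        _ = 1 := Finset.card_singleton i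
  have hcont : ∀ k < m, g (p k) = g (p (k+1)) ∨ cAdj n 1 (g (p k)) (g (p (k+1))) :=
    fun k hk => hg _ (hpX k hk.le) _ (hpX (k+1) hk) (hadj k hk)
  have h1 : ∀ k < m, g (p (k+1)) i ≤ g (p k) i + 1 := by
    intro k hk
    rcases hcont k hk with h | h
    · rw [h]; omega
    · rcases h.2.1 i with h' | h'
      · omega
      · rcases (abs_eq (by norm_num : (0:ℤ) ≤ 1)).mp h' with h'' | h'' <;> omega
  have h2 : ∀ a b : ℕ, a ≤ b → b ≤ m → g (p b) i ≤ g (p a) i + (b - a : ℕ) := by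
    intro a b hab hbm
    induction b, hab using Nat.le_induction with
    | base => simp
    | succ b hb ih =>
      have ih' := ih (by omega)
      have h1' := h1 b (by omega)
      omega
  have h3 : ∀ k ≤ m, g (p k) i = g (p 0) i + k := by
    intro k hk
    have ha := h2 0 k (Nat.zero_le _) hk
    have hb := h2 k m hk le_rfl
    omega
  have h4 : ∀ k < m, ∀ j, j ≠ i → g (p (k+1)) j = g (p k) j := by
    intro k hk j hj
    have hne : g (p k) ≠ g (p (k+1)) := by
      intro h
      have hc := congrFun h i
      have := h3 k hk.le
      have := h3 (k+1) hk
      omega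
    rcases hcont k hk with h | h
    · exact absurd h hne
    · by_contra hne2
      have hii : i ∈ Finset.univ.filter (fun t => g (p k) t ≠ g (p (k+1)) t) := by
        simp only [Finset.mem_filter, Finset.mem_univ, true_and]
        have := h3 k hk.le
        have := h3 (k+1) hk
        omega
      have hjj : j ∈ Finset.univ.filter (fun t => g (p k) t ≠ g (p (k+1)) t) := by
        simp only [Finset.mem_filter, Finset.mem_univ, true_and]
        exact fun h' => hne2 h'.symm
      have hsub : ({i, j} : Finset (Fin n)) ⊆
          Finset.univ.filter (fun t => g (p k) t ≠ g (p (k+1)) t) := by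
        intro t ht
        simp only [Finset.mem_insert, Finset.mem_singleton] at ht
        rcases ht with rfl | rfl
        · exact hii
        · exact hjj
      have hcard : 2 ≤ (Finset.univ.filter (fun t => g (p k) t ≠ g (p (k+1)) t)).card := by
        calc 2 = ({i, j} : Finset (Fin n)).card := (Finset.card_pair (Ne.symm hj)).symm
          _ ≤ _ := Finset.card_le_card hsub
      have := h.2.2
      omega
  have h5 : ∀ k ≤ m, ∀ j, j ≠ i → g (p k) j = g (p 0) j := by
    intro k
    induction k with
    | zero => intro _ j _; rfl
    | succ k ih =>
      intro hk j hj
      rw [h4 k (by omega) j hj]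
      exact ih (by omega) j hj
  exact fun k hk => ⟨h3 k hk, h5 k hk⟩

lemma cAdj_symm {n u : ℕ} {x y : Fin n → ℤ} (h : cAdj n u x y) : cAdj n u y x := by
  obtain ⟨h1, h2, h3⟩ := h
  refine ⟨h1.symm, fun i => ?_, ?_⟩
  · rcases h2 i with h' | h'
    · left; exact h'.symm
    · right; rw [abs_sub_comm] at h'; exact h'
  · have : (Finset.univ.filter (fun i => y i ≠ x i))
        = (Finset.univ.filter (fun i => x i ≠ y i)) := by
      apply Finset.filter_congr
      intro i _
      simp [ne_comm]
    rw [this]; exact h3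

/-- The corner-moving construction: if a corner `c` is missing from `B`,
then `B` is not a freezing set (for n ∈ {1,2}). -/
lemma not_freezing_of_missing_corner {n : ℕ} (hn : n = 1 ∨ n = 2)
    (r s : Fin n → ℤ) (hrs : ∀ i, r i < s i)
    (X : Set (Fin n → ℤ)) (hX : X = {x | ∀ i, r i ≤ x i ∧ x i ≤ s i})
    (B : Set (Fin n → ℤ)) (c : Fin n → ℤ)
    (hc : ∀ i, c i = r i ∨ c i = s i) (hcB : c ∉ B) :
    ¬FreezingSet (cAdj n 1) X B := by
  set c' : Fin n → ℤ := fun i => if c i = r i then c i + 1 else c i - 1 with hc'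
  have hcX : c ∈ X := by
    rw [hX]; intro i; rcases hc i with h | h <;> rw [h] <;>
      constructor <;> first | rfl | exact (hrs i).le
  have hc'X : c' ∈ X := by
    rw [hX]; intro i
    simp only [hc']
    rcases hc i with h | h
    · rw [if_pos h, h]; have := hrs i; omega
    · have hne : c i ≠ r i := by rw [h]; exact (hrs i).ne'
      rw [if_neg hne, h]; have := hrs i; omega
  have hpos : 0 < n := by omega
  have hcc' : c' ≠ c := by
    intro h
    have := congrFun h ⟨0, hpos⟩
    simp only [hc'] at this
    split at this <;> omega
  set g : (Fin n → ℤ) → (Fin n → ℤ) := fun x => if x = c then c' else x with hg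
  -- key: image of c is equal or adjacent to any X-neighbor of c
  have hkey : ∀ y ∈ X, cAdj n 1 c y → c' = y ∨ cAdj n 1 c' y := by
    intro y hy hadj
    obtain ⟨hne, hcoord, hcard⟩ := hadj
    obtain ⟨i0, hi0⟩ : ∃ i0, c i0 ≠ y i0 := by
      by_contra h
      push_neg at h
      exact hne (funext h)
    have hiff : ∀ j, j ≠ i0 → c j = y j := by
      intro j hj
      by_contra hj'
      have hsub : ({i0, j} : Finset (Fin n)) ⊆
          Finset.univ.filter (fun t => c t ≠ y t) := by
        intro t ht
        simp only [Finset.mem_insert, Finset.mem_singleton] at ht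
        rcases ht with rfl | rfl <;> simp [hi0, hj']
      have : 2 ≤ (Finset.univ.filter (fun t => c t ≠ y t)).card := by
        calc 2 = ({i0, j} : Finset (Fin n)).card := (Finset.card_pair (Ne.symm hj)).symm
          _ ≤ _ := Finset.card_le_card hsub
      omega
    -- y agrees with c' at i0
    have hyi0 : y i0 = c' i0 := by
      rcases hcoord i0 with h | h
      · exact absurd h hi0
      · have habs := (abs_eq (by norm_num : (0:ℤ) ≤ 1)).mp h
        have hyX : r i0 ≤ y i0 ∧ y i0 ≤ s i0 := by rw [hX] at hy; exact hy i0
        simp only [hc']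
        rcases hc i0 with h' | h'
        · rw [if_pos h']; omega
        · have hne' : c i0 ≠ r i0 := by rw [h']; exact (hrs i0).ne'
          rw [if_neg hne']; omega
    by_cases hcy : c' = y
    · exact Or.inl hcy
    · refine Or.inr ⟨hcy, fun j => ?_, ?_⟩
      · by_cases hj : j = i0
        · subst hj; left; exact hyi0.symm
        · right
          have h1 : y j = c j := (hiff j hj).symm
          simp only [hc', h1]
          split <;> simp
      · have hsub : (Finset.univ.filter (fun t => c' t ≠ y t)) ⊆ Finset.univ.erase i0 := by
          intro t ht
          simp only [Finset.mem_filter, Finset.mem_univ, true_and] at ht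
          simp only [Finset.mem_erase, Finset.mem_univ, and_true]
          intro h; subst h; exact ht hyi0.symm
        calc (Finset.univ.filter (fun t => c' t ≠ y t)).card
            ≤ (Finset.univ.erase i0).card := Finset.card_le_card hsub
          _ = n - 1 := by rw [Finset.card_erase_of_mem (Finset.mem_univ _)]; simp
          _ ≤ 1 := by omega
  intro ⟨_, hfreeze⟩
  have hgX : ∀ x ∈ X, g x ∈ X := by
    intro x hx
    simp only [hg]
    split <;> [exact hc'X; exact hx]
  have hgcont : DigCont (cAdj n 1) (cAdj n 1) X g := by
    intro x hx y hy hadj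
    by_cases hxc : x = c <;> by_cases hyc : y = c
    · subst hxc hyc; exact absurd rfl hadj.1
    · subst hxc
      have := hkey y hy hadj
      simp only [hg, if_pos rfl, if_neg hyc]
      exact this
    · subst hyc
      have := hkey x hx (cAdj_symm hadj)
      simp only [hg, if_pos rfl, if_neg hxc]
      rcases this with h | h
      · left; exact h.symm
      · right; exact cAdj_symm h
    · simp only [hg, if_neg hxc, if_neg hyc]
      exact Or.inr hadj
  have hgB : ∀ a ∈ B, g a = a := by
    intro a ha
    have : a ≠ c := fun h => hcB (h ▸ ha)
    simp [hg, this]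
  have := hfreeze g hgX hgcont hgB c hcX
  simp only [hg, if_pos rfl] at this
  exact hcc' this

/-- For n ∈ {1,2}, the corner set of a digital cube is a minimal freezing set for
(X, c_1). -/
theorem corners_minimal_freezingSet_c1 {n : ℕ} (hn : n = 1 ∨ n = 2)
    (r s : Fin n → ℤ) (hrs : ∀ i, r i < s i)
    (X : Set (Fin n → ℤ)) (hX : X = {x | ∀ i, r i ≤ x i ∧ x i ≤ s i})
    (A : Set (Fin n → ℤ)) (hA : A = {x | ∀ i, x i = r i ∨ x i = s i}) :
    FreezingSet (cAdj n 1) X A ∧ ∀ B ⊂ A, ¬FreezingSet (cAdj n 1) X B := by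
  have hAX : A ⊆ X := by
    intro x hxA
    rw [hA] at hxA; rw [hX]
    intro i
    have := hrs i
    rcases hxA i with h | h <;> rw [h] <;> omega
  constructor
  · refine ⟨hAX, ?_⟩
    intro g hgX hgcont hfix
    rcases hn with rfl | rfl
    · -- n = 1
      set m := (s 0 - r 0).toNat with hmdef
      have hm : (m : ℤ) = s 0 - r 0 := by have := hrs 0; omega
      set p : ℕ → Fin 1 → ℤ := fun k _ => r 0 + k with hp
      have hstep : ∀ k < m, p (k+1) 0 = p k 0 + 1 ∧ ∀ j, j ≠ (0:Fin 1) → p (k+1) j = p k j := by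
        intro k _
        constructor
        · simp only [hp]; push_cast; ring
        · intro j hj; exact absurd (Subsingleton.elim j 0) hj
      have hpX : ∀ k ≤ m, p k ∈ X := by
        intro k hk
        rw [hX]; intro i
        have hi : i = 0 := Subsingleton.elim i 0
        subst hi
        simp only [hp]
        have := hrs 0
        have : (k : ℤ) ≤ m := by exact_mod_cast hk
        omega
      have hp0A : p 0 ∈ A := by
        rw [hA]; intro i
        have hi : i = 0 := Subsingleton.elim i 0
        subst hi; left; simp [hp]
      have hpmA : p m ∈ A := by
        rw [hA]; intro i
        have hi : i = 0 := Subsingleton.elim i 0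
        subst hi; right; simp only [hp]; omega
      have hf0 : g (p 0) = p 0 := hfix _ hp0A
      have hfm : g (p m) = p m := hfix _ hpmA
      have hend : g (p m) 0 = g (p 0) 0 + m := by
        rw [hf0, hfm]; simp only [hp]; push_cast; ring
      have key := seg_lemma hgcont 0 m p hstep hpX hend
      intro x hx
      rw [hX] at hx
      set k := (x 0 - r 0).toNat with hkdef
      have hxb := hx 0
      have hk : k ≤ m := by omega
      have hkz : (k : ℤ) = x 0 - r 0 := by omega
      have hxp : x = p k := by
        funext j
        have hj : j = 0 := Subsingleton.elim j 0
        subst hj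
        simp only [hp]; omega
      rw [hxp]
      funext j
      have hj : j = 0 := Subsingleton.elim j 0
      subst hj
      have h1 := (key k hk).1
      rw [hf0] at h1
      simp only [hp] at h1 ⊢
      omega
    · -- n = 2
      have fin2 : ∀ j : Fin 2, j = 0 ∨ j = 1 := by decide
      have h10 : (1 : Fin 2) ≠ 0 := by decide
      have h01 : (0 : Fin 2) ≠ 1 := by decide
      set m0 := (s 0 - r 0).toNat with hm0def
      set m1 := (s 1 - r 1).toNat with hm1def
      have hm0 : (m0 : ℤ) = s 0 - r 0 := by have := hrs 0; omega
      have hm1 : (m1 : ℤ) = s 1 - r 1 := by have := hrs 1; omega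
      -- vertical edges
      have edge : ∀ a : ℤ, (∀ i : Fin 2, (if i = 0 then a else r 1) = r i ∨
            (if i = 0 then a else r 1) = s i) →
          (∀ i : Fin 2, (if i = 0 then a else s 1) = r i ∨
            (if i = 0 then a else s 1) = s i) →
          ∀ k ≤ m1, g (fun j => if j = 0 then a else r 1 + k)
            = (fun j => if j = 0 then a else r 1 + k) := by
        intro a hbotA htopA k hk
        set p : ℕ → Fin 2 → ℤ := fun k j => if j = 0 then a else r 1 + k with hp
        have hstep : ∀ k < m1, p (k+1) 1 = p k 1 + 1 ∧
            ∀ j, j ≠ (1:Fin 2) → p (k+1) j = p k j := by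
          intro k _
          constructor
          · simp only [hp, if_neg h10]; push_cast; ring
          · intro j hj
            rcases fin2 j with rfl | rfl
            · simp [hp]
            · exact absurd rfl hj
        have haX : r 0 ≤ a ∧ a ≤ s 0 := by
          rcases hbotA 0 with h | h <;> simp at h <;>
            rw [h] <;> have := hrs 0 <;> omega
        have hpX : ∀ k ≤ m1, p k ∈ X := by
          intro k hk'
          rw [hX]; intro i
          have hkz : (k : ℤ) ≤ m1 := by exact_mod_cast hk'
          rcases fin2 i with rfl | rfl
          · simp only [hp, if_pos rfl]; exact haX
          · simp only [hp, if_neg h10]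
            have := hrs 1
            omega
        have hp0A : p 0 ∈ A := by
          rw [hA]; intro i
          have := hbotA i
          simpa [hp] using this
        have hpmA : p m1 ∈ A := by
          rw [hA]; intro i
          have := htopA i
          rcases fin2 i with rfl | rfl
          · simpa [hp] using this
          · simp only [hp, if_neg h10]
            simp only [if_neg h10] at this
            right
            rcases this with h | h
            · have := hrs 1; omega
            · omega
        have hf0 : g (p 0) = p 0 := hfix _ hp0A
        have hfm : g (p m1) = p m1 := hfix _ hpmA
        have hend : g (p m1) 1 = g (p 0) 1 + m1 := by
          rw [hf0, hfm]; simp only [hp, if_neg h10]; push_cast; ring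
        have key := seg_lemma hgcont 1 m1 p hstep hpX hend
        funext j
        rcases fin2 j with rfl | rfl
        · have h2 := (key k hk).2 0 h01
          rw [hf0] at h2
          show g (p k) 0 = p k 0
          rw [h2]; simp [hp]
        · have h1 := (key k hk).1
          rw [hf0] at h1
          show g (p k) 1 = p k 1
          simp only [hp, if_neg h10] at h1 ⊢
          omega
      have hbotL : ∀ i : Fin 2, (if i = 0 then r 0 else r 1) = r i ∨
          (if i = 0 then r 0 else r 1) = s i := by
        intro i; rcases fin2 i with rfl | rfl <;> simp
      have htopL : ∀ i : Fin 2, (if i = 0 then r 0 else s 1) = r i ∨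
          (if i = 0 then r 0 else s 1) = s i := by
        intro i; rcases fin2 i with rfl | rfl <;> simp [h10]
      have hbotR : ∀ i : Fin 2, (if i = 0 then s 0 else r 1) = r i ∨
          (if i = 0 then s 0 else r 1) = s i := by
        intro i; rcases fin2 i with rfl | rfl <;> simp [h10]
      have htopR : ∀ i : Fin 2, (if i = 0 then s 0 else s 1) = r i ∨
          (if i = 0 then s 0 else s 1) = s i := by
        intro i; rcases fin2 i with rfl | rfl <;> simp [h10]
      have edgeL := edge (r 0) hbotL htopL
      have edgeR := edge (s 0) hbotR htopR
      -- horizontal sweep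
      intro x hx
      rw [hX] at hx
      have hx0 := hx 0
      have hx1 := hx 1
      set kx := (x 1 - r 1).toNat with hkxdef
      have hkx : kx ≤ m1 := by omega
      have hkxz : (kx : ℤ) = x 1 - r 1 := by omega
      set q : ℕ → Fin 2 → ℤ := fun k j => if j = 0 then r 0 + k else x 1 with hq
      have hq0 : q 0 = fun j => if j = 0 then r 0 else r 1 + kx := by
        funext j; rcases fin2 j with rfl | rfl <;> simp [hq] <;> omega
      have hqm : q m0 = fun j => if j = 0 then s 0 else r 1 + kx := by
        funext j; rcases fin2 j with rfl | rfl <;> simp [hq, h10] <;> omega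
      have hstep : ∀ k < m0, q (k+1) 0 = q k 0 + 1 ∧
          ∀ j, j ≠ (0:Fin 2) → q (k+1) j = q k j := by
        intro k _
        constructor
        · simp only [hq, if_pos rfl]; push_cast; ring
        · intro j hj
          rcases fin2 j with rfl | rfl
          · exact absurd rfl hj
          · simp [hq, h10]
      have hqX : ∀ k ≤ m0, q k ∈ X := by
        intro k hk'
        rw [hX]; intro i
        have hkz : (k : ℤ) ≤ m0 := by exact_mod_cast hk'
        rcases fin2 i with rfl | rfl
        · simp only [hq, if_pos rfl]; omega
        · simp only [hq, if_neg h10]; exact hx1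
      have hgq0 : g (q 0) = q 0 := by rw [hq0]; exact edgeL kx hkx
      have hgqm : g (q m0) = q m0 := by rw [hqm]; exact edgeR kx hkx
      have hend : g (q m0) 0 = g (q 0) 0 + m0 := by
        rw [hgq0, hgqm, hq0, hqm]
        simp
        omega
      have key := seg_lemma hgcont 0 m0 q hstep hqX hend
      set k0 := (x 0 - r 0).toNat with hk0def
      have hk0 : k0 ≤ m0 := by omega
      have hk0z : (k0 : ℤ) = x 0 - r 0 := by omega
      have hxq : x = q k0 := by
        funext j; rcases fin2 j with rfl | rfl <;> simp [hq, h10] <;> omega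
      rw [hxq]
      funext j
      rcases fin2 j with rfl | rfl
      · have h1 := (key k0 hk0).1
        rw [hgq0, hq0] at h1
        simp only [hq] at h1 ⊢
        simp at h1 ⊢
        omega
      · have h2 := (key k0 hk0).2 1 h10
        rw [hgq0, hq0] at h2
        simp only [hq] at h2 ⊢
        simp [h10] at h2 ⊢
        omega
  · intro B hB
    obtain ⟨c, hcA, hcB⟩ := Set.exists_of_ssubset hB
    rw [hA] at hcA
    exact not_freezing_of_missing_corner hn r s hrs X hX B c hcA hcB
end

section
/- Let X = {0,1}³ ⊆ ℤ³ and A = {(0,0,0), (0,1,1), (1,0,1), (1,1,0)}. Then A is a freezing set for (X, c_1). In particular, the full corner set of a cube need not be a minimal c_1-freezing set. -/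
instance cAdj.dec (n u : ℕ) (x y : Fin n → ℤ) : Decidable (cAdj n u x y) := by
  unfold cAdj; exact inferInstance

lemma mem8 (x : Fin 3 → ℤ) (h : ∀ i, x i = 0 ∨ x i = 1) :
    x = ![0,0,0] ∨ x = ![0,0,1] ∨ x = ![0,1,0] ∨ x = ![0,1,1] ∨
    x = ![1,0,0] ∨ x = ![1,0,1] ∨ x = ![1,1,0] ∨ x = ![1,1,1] := by
  have h0 := h 0; have h1 := h 1; have h2 := h 2
  have hx : x = ![x 0, x 1, x 2] := by
    funext i; fin_cases i <;> simp
  rcases h0 with h0|h0 <;> rcases h1 with h1|h1 <;> rcases h2 with h2|h2 <;>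
    rw [hx, h0, h1, h2] <;> decide

/-- Four of the eight corners of the unit cube form a freezing set for (X, c_1). -/
theorem hypercube_four_corners_freeze
    (X : Set (Fin 3 → ℤ)) (hX : X = {x | ∀ i, x i = 0 ∨ x i = 1})
    (A : Set (Fin 3 → ℤ))
    (hA : A = {![0, 0, 0], ![0, 1, 1], ![1, 0, 1], ![1, 1, 0]}) :
    FreezingSet (cAdj 3 1) X A := by
  subst hX hA
  constructor
  · intro a ha
    rcases ha with h|h|h|h <;> subst h <;> exact fun i => by fin_cases i <;> decide
  · intro g hg hcont hfix x hx
    have hx8 := mem8 x hx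
    have f1 : g ![0,0,0] = ![0,0,0] := hfix _ (Or.inl rfl)
    have f2 : g ![0,1,1] = ![0,1,1] := hfix _ (Or.inr (Or.inl rfl))
    have f3 : g ![1,0,1] = ![1,0,1] := hfix _ (Or.inr (Or.inr (Or.inl rfl)))
    have f4 : g ![1,1,0] = ![1,1,0] := hfix _ (Or.inr (Or.inr (Or.inr rfl)))
    rcases hx8 with h|h|h|h|h|h|h|h <;> subst h
    · exact f1
    · -- x = ![0,0,1]; neighbors ![0,0,0], ![0,1,1], ![1,0,1]
      have h1 := hcont ![0,0,1] (by decide) ![0,0,0] (by decide) (by decide)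
      have h2 := hcont ![0,0,1] (by decide) ![0,1,1] (by decide) (by decide)
      have h3 := hcont ![0,0,1] (by decide) ![1,0,1] (by decide) (by decide)
      rw [f1] at h1; rw [f2] at h2; rw [f3] at h3
      have hgx := mem8 _ (hg ![0,0,1] (by decide))
      rcases hgx with e|e|e|e|e|e|e|e <;> rw [e] at h1 h2 h3 ⊢ <;>
        first | rfl | (exfalso; revert h1 h2 h3; decide)
    · have h1 := hcont ![0,1,0] (by decide) ![0,0,0] (by decide) (by decide)
      have h2 := hcont ![0,1,0] (by decide) ![0,1,1] (by decide) (by decide)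
      have h3 := hcont ![0,1,0] (by decide) ![1,1,0] (by decide) (by decide)
      rw [f1] at h1; rw [f2] at h2; rw [f4] at h3
      have hgx := mem8 _ (hg ![0,1,0] (by decide))
      rcases hgx with e|e|e|e|e|e|e|e <;> rw [e] at h1 h2 h3 ⊢ <;>
        first | rfl | (exfalso; revert h1 h2 h3; decide)
    · exact f2
    · have h1 := hcont ![1,0,0] (by decide) ![0,0,0] (by decide) (by decide)
      have h2 := hcont ![1,0,0] (by decide) ![1,0,1] (by decide) (by decide)
      have h3 := hcont ![1,0,0] (by decide) ![1,1,0] (by decide) (by decide)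
      rw [f1] at h1; rw [f3] at h2; rw [f4] at h3
      have hgx := mem8 _ (hg ![1,0,0] (by decide))
      rcases hgx with e|e|e|e|e|e|e|e <;> rw [e] at h1 h2 h3 ⊢ <;>
        first | rfl | (exfalso; revert h1 h2 h3; decide)
    · exact f3
    · exact f4
    · have h1 := hcont ![1,1,1] (by decide) ![0,1,1] (by decide) (by decide)
      have h2 := hcont ![1,1,1] (by decide) ![1,0,1] (by decide) (by decide)
      have h3 := hcont ![1,1,1] (by decide) ![1,1,0] (by decide) (by decide)
      rw [f2] at h1; rw [f3] at h2; rw [f4] at h3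
      have hgx := mem8 _ (hg ![1,1,1] (by decide))
      rcases hgx with e|e|e|e|e|e|e|e <;> rw [e] at h1 h2 h3 ⊢ <;>
        first | rfl | (exfalso; revert h1 h2 h3; decide)
end

section
/- Let X = ⋃_{i=1}^{m} K_i ⊆ ℤⁿ where each K_i = ∏_{j=1}^{n} [a_{ij}, b_{ij}] ∩ ℤⁿ is a digital cube, m ≥ 1, and X is c_1-connected. Let A_i = ∏_{j=1}^{n} {a_{ij}, b_{ij}} be the corner set of K_i and A = ⋃_{i=1}^{m} A_i. Then A is a freezing set for (X, c_1). -/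
namespace UCFS

variable {n : ℕ}

def l1 (u v : Fin n → ℤ) : ℕ := ∑ j, (u j - v j).natAbs

lemma l1_self (u : Fin n → ℤ) : l1 u u = 0 := by
  simp [l1]

lemma l1_eq_zero {u v : Fin n → ℤ} (h : l1 u v = 0) : u = v := by
  funext j
  have h2 := (Finset.sum_eq_zero_iff.mp h) j (Finset.mem_univ j)
  omega

lemma l1_comm (u v : Fin n → ℤ) : l1 u v = l1 v u := by
  refine Finset.sum_congr rfl fun j _ => ?_
  omega

lemma l1_triangle (u v w : Fin n → ℤ) : l1 u w ≤ l1 u v + l1 v w := by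
  rw [l1, l1, l1, ← Finset.sum_add_distrib]
  refine Finset.sum_le_sum fun j _ => ?_
  omega

lemma adj_l1 {x y : Fin n → ℤ} (h : cAdj n 1 x y) : l1 x y ≤ 1 := by
  obtain ⟨-, hd, hc⟩ := h
  calc l1 x y ≤ ∑ j, (if x j ≠ y j then 1 else 0) := by
        refine Finset.sum_le_sum fun j _ => ?_
        rcases hd j with h1 | h1
        · simp [h1]
        · have h2 : ((x j - y j).natAbs : ℤ) = 1 := by
            rw [← Int.abs_eq_natAbs]; exact h1
          have h3 : (x j - y j).natAbs = 1 := by exact_mod_cast h2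
          have h4 : x j ≠ y j := by omega
          simp [h4, h3]
    _ = (Finset.univ.filter (fun j => x j ≠ y j)).card := (Finset.card_filter _ _).symm
    _ ≤ 1 := hc

lemma cube_lip {X : Set (Fin n → ℤ)} {g : (Fin n → ℤ) → (Fin n → ℤ)}
    (hg : DigCont (cAdj n 1) (cAdj n 1) X g)
    (a b : Fin n → ℤ)
    (hKX : {y : Fin n → ℤ | ∀ j, a j ≤ y j ∧ y j ≤ b j} ⊆ X) :
    ∀ (d : ℕ) (c x : Fin n → ℤ), (∀ j, a j ≤ c j ∧ c j ≤ b j) →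
      (∀ j, a j ≤ x j ∧ x j ≤ b j) → l1 x c = d → l1 (g x) (g c) ≤ d := by
  intro d
  induction d with
  | zero =>
      intro c x hc hx h0
      rw [l1_eq_zero h0, l1_self]
  | succ d ih =>
      intro c x hc hx hd
      have hne : x ≠ c := by
        intro h; rw [h, l1_self] at hd; omega
      obtain ⟨j, hj⟩ : ∃ j, x j ≠ c j := by
        by_contra h'; push_neg at h'; exact hne (funext h')
      have hcj := hc j
      have hxj := hx j
      have key : ∃ s : ℤ, (s = 1 ∨ s = -1) ∧ a j ≤ c j + s ∧ c j + s ≤ b j ∧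
          (x j - (c j + s)).natAbs + 1 = (x j - c j).natAbs := by
        rcases lt_or_gt_of_ne hj with hlt | hlt
        · exact ⟨-1, Or.inr rfl, by omega, by omega, by omega⟩
        · exact ⟨1, Or.inl rfl, by omega, by omega, by omega⟩
      obtain ⟨s, hs, ha', hb', hnat⟩ := key
      set c' : Fin n → ℤ := Function.update c j (c j + s) with hc'def
      have hc'j : c' j = c j + s := Function.update_self j (c j + s) c
      have hc'ne : ∀ i, i ≠ j → c' i = c i := fun i hi =>
        Function.update_of_ne hi (c j + s) c
      have hc'K : ∀ i, a i ≤ c' i ∧ c' i ≤ b i := by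
        intro i
        by_cases hij : i = j
        · subst hij; rw [hc'j]; exact ⟨ha', hb'⟩
        · rw [hc'ne i hij]; exact hc i
      have hadj : cAdj n 1 c c' := by
        refine ⟨?_, ?_, ?_⟩
        · intro h
          have : c j = c' j := by rw [← h]
          rw [hc'j] at this
          rcases hs with h1 | h1 <;> omega
        · intro i
          by_cases hij : i = j
          · subst hij
            right
            rw [hc'j]
            rcases hs with h1 | h1 <;> subst h1 <;>
              [skip; skip] <;> simp
          · left; rw [hc'ne i hij]
        · have hsub : Finset.univ.filter (fun i => c i ≠ c' i) ⊆ {j} := by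
            intro i hi
            simp only [Finset.mem_filter, Finset.mem_singleton] at *
            by_contra hij
            exact hi.2 (hc'ne i hij).symm
          calc (Finset.univ.filter (fun i => c i ≠ c' i)).card
              ≤ ({j} : Finset (Fin n)).card := Finset.card_le_card hsub
            _ = 1 := Finset.card_singleton j
      have hl1 : l1 x c' = d := by
        have e1 := Finset.sum_erase_add Finset.univ
          (fun i => (x i - c' i).natAbs) (Finset.mem_univ j)
        have e2 := Finset.sum_erase_add Finset.univ
          (fun i => (x i - c i).natAbs) (Finset.mem_univ j)
        have h1 : ∑ i ∈ Finset.univ.erase j, (x i - c' i).natAbs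
            = ∑ i ∈ Finset.univ.erase j, (x i - c i).natAbs := by
          refine Finset.sum_congr rfl fun i hi => ?_
          rw [hc'ne i (Finset.ne_of_mem_erase hi)]
        rw [h1, hc'j] at e1
        rw [l1] at hd ⊢
        omega
      have hstep : l1 (g c') (g c) ≤ 1 := by
        rcases hg c (hKX hc) c' (hKX hc'K) hadj with he | hadj'
        · rw [← he, l1_self]; omega
        · rw [l1_comm]; exact adj_l1 hadj'
      calc l1 (g x) (g c) ≤ l1 (g x) (g c') + l1 (g c') (g c) := l1_triangle _ _ _
        _ ≤ d + 1 := Nat.add_le_add (ih c' x hc'K hx hl1) hstep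

lemma pin (a b : Fin n → ℤ) (x z : Fin n → ℤ)
    (hx : ∀ j, a j ≤ x j ∧ x j ≤ b j)
    (h : ∀ c : Fin n → ℤ, (∀ j, c j = a j ∨ c j = b j) → l1 z c ≤ l1 x c) :
    z = x := by
  by_contra hne
  obtain ⟨j0, hj0⟩ : ∃ j, z j ≠ x j := by
    by_contra h'; push_neg at h'; exact hne (funext h')
  set c : Fin n → ℤ := fun j => if x j ≤ z j then a j else b j with hcdef
  have hcorner : ∀ j, c j = a j ∨ c j = b j := by
    intro j
    by_cases h' : x j ≤ z j
    · left; simp [hcdef, h']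
    · right; simp [hcdef, h']
  have hlt : l1 x c < l1 z c := by
    refine Finset.sum_lt_sum (fun j _ => ?_) ⟨j0, Finset.mem_univ j0, ?_⟩
    · have h1 := hx j
      simp only [hcdef]
      split_ifs with h' <;> omega
    · have h1 := hx j0
      simp only [hcdef]
      split_ifs with h' <;> omega
  exact absurd (h c hcorner) (by omega)

end UCFS

/-- The union of the corner sets of cubes decomposing a c_1-connected image X is a
freezing set for (X, c_1). -/
theorem unionCubes_freezingSet_c1 {n m : ℕ} (hm : 1 ≤ m)
    (a b : Fin m → Fin n → ℤ) (hab : ∀ i j, a i j ≤ b i j)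
    (K : Fin m → Set (Fin n → ℤ))
    (hK : ∀ i, K i = {x | ∀ j, a i j ≤ x j ∧ x j ≤ b i j})
    (X : Set (Fin n → ℤ)) (hX : X = ⋃ i, K i)
    (hconn : DigConnected (cAdj n 1) X)
    (A : Set (Fin n → ℤ)) (hA : A = ⋃ i, {x | ∀ j, x j = a i j ∨ x j = b i j}) :
    FreezingSet (cAdj n 1) X A := by
  constructor
  · rw [hA, hX]
    refine Set.iUnion_subset fun i => ?_
    intro x hx
    refine Set.mem_iUnion.mpr ⟨i, ?_⟩
    rw [hK i]
    intro j
    rcases hx j with h | h <;> rw [h]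
    exacts [⟨le_refl _, hab i j⟩, ⟨hab i j, le_refl _⟩]
  · intro g hgX hg hfix x hx
    rw [hX] at hx
    simp only [Set.mem_iUnion] at hx
    obtain ⟨i, hxi⟩ := hx
    rw [hK i] at hxi
    have hKX : {y : Fin n → ℤ | ∀ j, a i j ≤ y j ∧ y j ≤ b i j} ⊆ X := by
      rw [hX]
      intro y hy
      exact Set.mem_iUnion.mpr ⟨i, by rw [hK i]; exact hy⟩
    refine UCFS.pin (a i) (b i) x (g x) hxi ?_
    intro c hc
    have hcK : ∀ j, a i j ≤ c j ∧ c j ≤ b i j := by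
      intro j
      rcases hc j with h | h <;> rw [h]
      exacts [⟨le_refl _, hab i j⟩, ⟨hab i j, le_refl _⟩]
    have hgc : g c = c := hfix c (by rw [hA]; exact Set.mem_iUnion.mpr ⟨i, hc⟩)
    have hlip := UCFS.cube_lip hg (a i) (b i) hKX (UCFS.l1 x c) c x hcK hxi rfl
    rw [hgc] at hlip
    exact hlip
end

section
/- Let X = ([0,6]³ \ [2,4]³) ∩ ℤ³ be a digital cube with a cubical cavity. Then A = {0, 6}³ (the 8 outer corners) is a freezing set for (X, c_1). -/
namespace CubeFreeze

/-- ℓ¹ distance on `Fin 3 → ℤ`. -/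
def D3 (x y : Fin 3 → ℤ) : ℤ := ∑ i, |x i - y i|

lemma D3_eq (x y : Fin 3 → ℤ) : D3 x y = |x 0 - y 0| + |x 1 - y 1| + |x 2 - y 2| := by
  simp [D3, Fin.sum_univ_three]

lemma D3_self (x : Fin 3 → ℤ) : D3 x x = 0 := by simp [D3]

lemma D3_nonneg (x y : Fin 3 → ℤ) : 0 ≤ D3 x y :=
  Finset.sum_nonneg fun i _ => abs_nonneg _

lemma fin3_forall (P : Fin 3 → Prop) : (∀ i, P i) ↔ P 0 ∧ P 1 ∧ P 2 :=
  ⟨fun h => ⟨h 0, h 1, h 2⟩, fun ⟨a, b, c⟩ i => by fin_cases i <;> assumption⟩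

lemma D3_eq_zero {x y : Fin 3 → ℤ} (h : D3 x y = 0) : x = y := by
  rw [D3_eq] at h
  have h0 := abs_nonneg (x 0 - y 0)
  have h1 := abs_nonneg (x 1 - y 1)
  have h2 := abs_nonneg (x 2 - y 2)
  have e0 : x 0 = y 0 := by
    have : |x 0 - y 0| = 0 := by linarith
    have := abs_eq_zero.mp this; linarith
  have e1 : x 1 = y 1 := by
    have : |x 1 - y 1| = 0 := by linarith
    have := abs_eq_zero.mp this; linarith
  have e2 : x 2 = y 2 := by
    have : |x 2 - y 2| = 0 := by linarith
    have := abs_eq_zero.mp this; linarith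
  funext i; fin_cases i <;> assumption

lemma D3_triangle (x y z : Fin 3 → ℤ) : D3 x z ≤ D3 x y + D3 y z := by
  rw [D3_eq, D3_eq, D3_eq]
  have t0 := abs_sub_le (x 0) (y 0) (z 0)
  have t1 := abs_sub_le (x 1) (y 1) (z 1)
  have t2 := abs_sub_le (x 2) (y 2) (z 2)
  linarith

lemma adj_D3 {x y : Fin 3 → ℤ} (h : cAdj 3 1 x y) : D3 x y ≤ 1 := by
  obtain ⟨-, hcoord, hcard⟩ := h
  classical
  set s := Finset.univ.filter (fun i => x i ≠ y i) with hs
  have heq : ∑ i ∈ s, |x i - y i| = D3 x y := by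
    apply Finset.sum_subset (Finset.subset_univ _)
    intro i _ hi
    simp [hs] at hi
    simp [hi]
  have hle : ∑ i ∈ s, |x i - y i| ≤ s.card • (1 : ℤ) := by
    apply Finset.sum_le_card_nsmul
    intro i hi
    simp [hs] at hi
    rcases hcoord i with h | h
    · exact absurd h hi
    · omega
  have : (s.card : ℤ) ≤ 1 := by exact_mod_cast hcard
  calc D3 x y = ∑ i ∈ s, |x i - y i| := heq.symm
    _ ≤ s.card • (1 : ℤ) := hle
    _ = s.card := by simp
    _ ≤ 1 := this

/-- Every path (each step equal or c₁-adjacent) of length m shrinks distance to ≤ m. -/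
lemma path_bound : ∀ (m : ℕ) (r : ℕ → (Fin 3 → ℤ)),
    (∀ k, k < m → r k = r (k + 1) ∨ cAdj 3 1 (r k) (r (k + 1))) →
    D3 (r 0) (r m) ≤ (m : ℤ) := by
  intro m
  induction m with
  | zero => intro r _; simp [D3_self]
  | succ n ih =>
    intro r hr
    have h1 : D3 (r 0) (r 1) ≤ 1 := by
      rcases hr 0 (Nat.succ_pos n) with h | h
      · rw [h, D3_self]; norm_num
      · exact adj_D3 h
    have h2 : D3 (r 1) (r (n + 1)) ≤ (n : ℤ) := by
      have := ih (fun k => r (k + 1)) (fun k hk => hr (k + 1) (by omega))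
      simpa using this
    have := D3_triangle (r 0) (r 1) (r (n + 1))
    push_cast
    linarith

/-- The corner of the cube indexed by `s`. -/
def corner (s : Fin 3 → Bool) : Fin 3 → ℤ := fun i => if s i then 6 else 0

lemma corner_mem_A (s : Fin 3 → Bool) : ∀ i, corner s i = 0 ∨ corner s i = 6 := by
  intro i; unfold corner; cases s i <;> simp

/-- Updating one coordinate by ±1 yields a c₁-adjacent point. -/
lemma update_adj (x : Fin 3 → ℤ) (j : Fin 3) (d : ℤ) (hd : |d| = 1) :
    cAdj 3 1 x (Function.update x j (x j + d)) := by
  classical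
  have hd0 : d ≠ 0 := by intro h; rw [h] at hd; simp at hd
  refine ⟨?_, ?_, ?_⟩
  · intro h
    have := congrFun h j
    rw [Function.update_self] at this
    omega
  · intro i
    by_cases hij : i = j
    · subst hij
      right
      rw [Function.update_self]
      simpa using hd
    · left
      rw [Function.update_of_ne hij]
  · have hsub : (Finset.univ.filter
        (fun i => x i ≠ Function.update x j (x j + d) i)) ⊆ {j} := by
      intro i hi
      simp only [Finset.mem_filter] at hi
      by_contra hij
      simp only [Finset.mem_singleton] at hij
      exact hi.2 (by rw [Function.update_of_ne hij])
    calc (Finset.univ.filter (fun i => x i ≠ Function.update x j (x j + d) i)).card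
        ≤ ({j} : Finset (Fin 3)).card := Finset.card_le_card hsub
      _ = 1 := Finset.card_singleton j

lemma abs_step_up {p q : ℤ} (h : p < q) : |p + 1 - q| + 1 = |p - q| := by
  rw [abs_of_nonpos (by omega), abs_of_nonpos (by omega)]; ring

lemma abs_step_down {p q : ℤ} (h : q < p) : |p - 1 - q| + 1 = |p - q| := by
  rw [abs_of_nonneg (by omega), abs_of_nonneg (by omega)]; ring

/-- One good move: from x ∈ X (not yet at the corner) we can take one c₁-step
towards the corner while staying in X. -/
lemma step (x : Fin 3 → ℤ) (hb : ∀ i, 0 ≤ x i ∧ x i ≤ 6)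
    (hc : ¬ ∀ i, 2 ≤ x i ∧ x i ≤ 4) (s : Fin 3 → Bool) (hne : x ≠ corner s) :
    ∃ x', (∀ i, 0 ≤ x' i ∧ x' i ≤ 6) ∧ (¬ ∀ i, 2 ≤ x' i ∧ x' i ≤ 4) ∧
      cAdj 3 1 x x' ∧ D3 x' (corner s) + 1 = D3 x (corner s) := by
  set e := corner s with he'
  have he : ∀ i, e i = 0 ∨ e i = 6 := corner_mem_A s
  obtain ⟨hb0, hb1, hb2⟩ := (fin3_forall _).mp hb
  rw [fin3_forall] at hc
  have he0 := he 0; have he1 := he 1; have he2 := he 2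
  have hd : x 0 ≠ e 0 ∨ x 1 ≠ e 1 ∨ x 2 ≠ e 2 := by
    by_contra h
    push_neg at h
    exact hne (by funext i; fin_cases i <;> simp [h.1, h.2.1, h.2.2])
  have main :
      (x 0 < e 0 ∧ (0 ≤ x 0 + 1 ∧ x 0 + 1 ≤ 6) ∧
        ¬((2 ≤ x 0 + 1 ∧ x 0 + 1 ≤ 4) ∧ (2 ≤ x 1 ∧ x 1 ≤ 4) ∧ (2 ≤ x 2 ∧ x 2 ≤ 4))) ∨
      (e 0 < x 0 ∧ (0 ≤ x 0 - 1 ∧ x 0 - 1 ≤ 6) ∧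
        ¬((2 ≤ x 0 - 1 ∧ x 0 - 1 ≤ 4) ∧ (2 ≤ x 1 ∧ x 1 ≤ 4) ∧ (2 ≤ x 2 ∧ x 2 ≤ 4))) ∨
      (x 1 < e 1 ∧ (0 ≤ x 1 + 1 ∧ x 1 + 1 ≤ 6) ∧
        ¬((2 ≤ x 0 ∧ x 0 ≤ 4) ∧ (2 ≤ x 1 + 1 ∧ x 1 + 1 ≤ 4) ∧ (2 ≤ x 2 ∧ x 2 ≤ 4))) ∨
      (e 1 < x 1 ∧ (0 ≤ x 1 - 1 ∧ x 1 - 1 ≤ 6) ∧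
        ¬((2 ≤ x 0 ∧ x 0 ≤ 4) ∧ (2 ≤ x 1 - 1 ∧ x 1 - 1 ≤ 4) ∧ (2 ≤ x 2 ∧ x 2 ≤ 4))) ∨
      (x 2 < e 2 ∧ (0 ≤ x 2 + 1 ∧ x 2 + 1 ≤ 6) ∧
        ¬((2 ≤ x 0 ∧ x 0 ≤ 4) ∧ (2 ≤ x 1 ∧ x 1 ≤ 4) ∧ (2 ≤ x 2 + 1 ∧ x 2 + 1 ≤ 4))) ∨
      (e 2 < x 2 ∧ (0 ≤ x 2 - 1 ∧ x 2 - 1 ≤ 6) ∧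
        ¬((2 ≤ x 0 ∧ x 0 ≤ 4) ∧ (2 ≤ x 1 ∧ x 1 ≤ 4) ∧ (2 ≤ x 2 - 1 ∧ x 2 - 1 ≤ 4))) := by
    omega
  rcases main with ⟨hlt, hbd, hcav⟩ | ⟨hlt, hbd, hcav⟩ | ⟨hlt, hbd, hcav⟩ |
    ⟨hlt, hbd, hcav⟩ | ⟨hlt, hbd, hcav⟩ | ⟨hlt, hbd, hcav⟩
  · refine ⟨Function.update x 0 (x 0 + 1), ?_, ?_, update_adj x 0 1 (by norm_num), ?_⟩
    · rw [fin3_forall]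
      simp only [Function.update_self, Function.update_of_ne (by decide : (1:Fin 3) ≠ 0),
        Function.update_of_ne (by decide : (2:Fin 3) ≠ 0)]
      omega
    · rw [fin3_forall]
      simp only [Function.update_self, Function.update_of_ne (by decide : (1:Fin 3) ≠ 0),
        Function.update_of_ne (by decide : (2:Fin 3) ≠ 0)]
      tauto
    · rw [D3_eq, D3_eq]
      simp only [Function.update_self, Function.update_of_ne (by decide : (1:Fin 3) ≠ 0),
        Function.update_of_ne (by decide : (2:Fin 3) ≠ 0)]
      have := abs_step_up hlt
      linarith
  · refine ⟨Function.update x 0 (x 0 + (-1)), ?_, ?_, update_adj x 0 (-1) (by norm_num), ?_⟩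
    · rw [fin3_forall]
      simp only [Function.update_self, Function.update_of_ne (by decide : (1:Fin 3) ≠ 0),
        Function.update_of_ne (by decide : (2:Fin 3) ≠ 0)]
      omega
    · rw [fin3_forall]
      simp only [Function.update_self, Function.update_of_ne (by decide : (1:Fin 3) ≠ 0),
        Function.update_of_ne (by decide : (2:Fin 3) ≠ 0)]
      intro h; apply hcav; constructor
      · omega
      · exact h.2
    · rw [D3_eq, D3_eq]
      simp only [Function.update_self, Function.update_of_ne (by decide : (1:Fin 3) ≠ 0),
        Function.update_of_ne (by decide : (2:Fin 3) ≠ 0)]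
      have := abs_step_down hlt
      have h' : |x 0 + (-1) - e 0| = |x 0 - 1 - e 0| := by ring_nf
      linarith [h' ▸ (abs_step_down hlt)]
  · refine ⟨Function.update x 1 (x 1 + 1), ?_, ?_, update_adj x 1 1 (by norm_num), ?_⟩
    · rw [fin3_forall]
      simp only [Function.update_self, Function.update_of_ne (by decide : (0:Fin 3) ≠ 1),
        Function.update_of_ne (by decide : (2:Fin 3) ≠ 1)]
      omega
    · rw [fin3_forall]
      simp only [Function.update_self, Function.update_of_ne (by decide : (0:Fin 3) ≠ 1),
        Function.update_of_ne (by decide : (2:Fin 3) ≠ 1)]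
      tauto
    · rw [D3_eq, D3_eq]
      simp only [Function.update_self, Function.update_of_ne (by decide : (0:Fin 3) ≠ 1),
        Function.update_of_ne (by decide : (2:Fin 3) ≠ 1)]
      have := abs_step_up hlt
      linarith
  · refine ⟨Function.update x 1 (x 1 + (-1)), ?_, ?_, update_adj x 1 (-1) (by norm_num), ?_⟩
    · rw [fin3_forall]
      simp only [Function.update_self, Function.update_of_ne (by decide : (0:Fin 3) ≠ 1),
        Function.update_of_ne (by decide : (2:Fin 3) ≠ 1)]
      omega
    · rw [fin3_forall]
      simp only [Function.update_self, Function.update_of_ne (by decide : (0:Fin 3) ≠ 1),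
        Function.update_of_ne (by decide : (2:Fin 3) ≠ 1)]
      intro h; apply hcav
      exact ⟨h.1, by omega, h.2.2⟩
    · rw [D3_eq, D3_eq]
      simp only [Function.update_self, Function.update_of_ne (by decide : (0:Fin 3) ≠ 1),
        Function.update_of_ne (by decide : (2:Fin 3) ≠ 1)]
      have h' : |x 1 + (-1) - e 1| = |x 1 - 1 - e 1| := by ring_nf
      linarith [h' ▸ (abs_step_down hlt)]
  · refine ⟨Function.update x 2 (x 2 + 1), ?_, ?_, update_adj x 2 1 (by norm_num), ?_⟩
    · rw [fin3_forall]
      simp only [Function.update_self, Function.update_of_ne (by decide : (0:Fin 3) ≠ 2),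
        Function.update_of_ne (by decide : (1:Fin 3) ≠ 2)]
      omega
    · rw [fin3_forall]
      simp only [Function.update_self, Function.update_of_ne (by decide : (0:Fin 3) ≠ 2),
        Function.update_of_ne (by decide : (1:Fin 3) ≠ 2)]
      tauto
    · rw [D3_eq, D3_eq]
      simp only [Function.update_self, Function.update_of_ne (by decide : (0:Fin 3) ≠ 2),
        Function.update_of_ne (by decide : (1:Fin 3) ≠ 2)]
      have := abs_step_up hlt
      linarith
  · refine ⟨Function.update x 2 (x 2 + (-1)), ?_, ?_, update_adj x 2 (-1) (by norm_num), ?_⟩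
    · rw [fin3_forall]
      simp only [Function.update_self, Function.update_of_ne (by decide : (0:Fin 3) ≠ 2),
        Function.update_of_ne (by decide : (1:Fin 3) ≠ 2)]
      omega
    · rw [fin3_forall]
      simp only [Function.update_self, Function.update_of_ne (by decide : (0:Fin 3) ≠ 2),
        Function.update_of_ne (by decide : (1:Fin 3) ≠ 2)]
      intro h; apply hcav
      exact ⟨h.1, h.2.1, by omega⟩
    · rw [D3_eq, D3_eq]
      simp only [Function.update_self, Function.update_of_ne (by decide : (0:Fin 3) ≠ 2),
        Function.update_of_ne (by decide : (1:Fin 3) ≠ 2)]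
      have h' : |x 2 + (-1) - e 2| = |x 2 - 1 - e 2| := by ring_nf
      linarith [h' ▸ (abs_step_down hlt)]

/-- A geodesic path from any point of X to any corner, staying in X. -/
lemma exists_path (s : Fin 3 → Bool) : ∀ (n : ℕ) (x : Fin 3 → ℤ),
    (∀ i, 0 ≤ x i ∧ x i ≤ 6) → (¬ ∀ i, 2 ≤ x i ∧ x i ≤ 4) →
    D3 x (corner s) = (n : ℤ) →
    ∃ r : ℕ → (Fin 3 → ℤ), r 0 = x ∧ r n = corner s ∧
      (∀ k, k ≤ n → (∀ i, 0 ≤ r k i ∧ r k i ≤ 6) ∧ ¬ ∀ i, 2 ≤ r k i ∧ r k i ≤ 4) ∧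
      ∀ k, k < n → r k = r (k + 1) ∨ cAdj 3 1 (r k) (r (k + 1)) := by
  intro n
  induction n with
  | zero =>
    intro x hb hc h0
    have hx : x = corner s := D3_eq_zero (by exact_mod_cast h0)
    exact ⟨fun _ => x, rfl, hx, fun k hk => ⟨hb, hc⟩, fun k hk => by omega⟩
  | succ n ih =>
    intro x hb hc hD
    have hne : x ≠ corner s := by
      intro h
      rw [h, D3_self] at hD
      omega
    obtain ⟨x', hb', hc', hadj, hstep⟩ := step x hb hc s hne
    have hD' : D3 x' (corner s) = (n : ℤ) := by push_cast at hD ⊢; linarith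
    obtain ⟨r', h0', hn', hmem', hstep'⟩ := ih x' hb' hc' hD'
    refine ⟨fun k => if k = 0 then x else r' (k - 1), by simp, ?_, ?_, ?_⟩
    · simp only [Nat.succ_ne_zero, if_neg (Nat.succ_ne_zero n)]
      simpa using hn'
    · intro k hk
      by_cases hk0 : k = 0
      · simp [hk0, hb, hc]
      · simp only [if_neg hk0]
        exact hmem' (k - 1) (by omega)
    · intro k hk
      by_cases hk0 : k = 0
      · subst hk0
        right
        simpa [h0'] using hadj
      · simp only [if_neg hk0, if_neg (by omega : ¬ k + 1 = 0)]
        have : k - 1 + 1 = k := by omega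
        have hh := hstep' (k - 1) (by omega)
        rw [this] at hh
        have : k + 1 - 1 = k := by omega
        rw [this]
        exact hh

lemma abs_lo {t : ℤ} (h : 0 ≤ t) : |t - 0| = t := by
  rw [sub_zero, abs_of_nonneg h]

lemma abs_hi {t : ℤ} (h : t ≤ 6) : |t - 6| = 6 - t := by
  rw [abs_of_nonpos (by omega)]; ring

end CubeFreeze

open CubeFreeze in
/-- For the cube [0,6]³ with cavity [2,4]³ removed, the eight outer corners form a
freezing set for (X, c_1). -/
theorem cubeWithCavity_corners_freeze
    (X : Set (Fin 3 → ℤ))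
    (hX : X = {x | (∀ i, 0 ≤ x i ∧ x i ≤ 6) ∧ ¬(∀ i, 2 ≤ x i ∧ x i ≤ 4)})
    (A : Set (Fin 3 → ℤ)) (hA : A = {x | ∀ i, x i = 0 ∨ x i = 6}) :
    FreezingSet (cAdj 3 1) X A := by
  subst hX hA
  constructor
  · intro x hx
    have hx' : ∀ i, x i = 0 ∨ x i = 6 := hx
    constructor
    · intro i; rcases hx' i with h | h <;> omega
    · intro h
      have h0 := h 0
      rcases hx' 0 with h' | h' <;> omega
  · intro g hg hcont hfix x hx
    have hcorner : ∀ s : Fin 3 → Bool, g (corner s) = corner s := by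
      intro s
      exact hfix _ (corner_mem_A s)
    have hcornerX : ∀ s : Fin 3 → Bool,
        (corner s) ∈ {x : Fin 3 → ℤ | (∀ i, 0 ≤ x i ∧ x i ≤ 6) ∧
          ¬(∀ i, 2 ≤ x i ∧ x i ≤ 4)} := by
      intro s
      constructor
      · intro i; rcases corner_mem_A s i with h | h <;> omega
      · intro h
        have h0 := h 0
        rcases corner_mem_A s 0 with h' | h' <;> omega
    have hle : ∀ s : Fin 3 → Bool, D3 (g x) (corner s) ≤ D3 x (corner s) := by
      intro s
      set n : ℕ := (D3 x (corner s)).toNat with hn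
      have hn' : D3 x (corner s) = (n : ℤ) :=
        (Int.toNat_of_nonneg (D3_nonneg x (corner s))).symm
      obtain ⟨r, h0, hm, hmem, hstep⟩ := exists_path s n x hx.1 hx.2 hn'
      have hstep' : ∀ k, k < n → g (r k) = g (r (k + 1)) ∨
          cAdj 3 1 (g (r k)) (g (r (k + 1))) := by
        intro k hk
        rcases hstep k hk with h | h
        · left; rw [h]
        · exact hcont (r k) (hmem k (by omega)) (r (k + 1)) (hmem (k + 1) (by omega)) h
      have := path_bound n (fun k => g (r k)) hstep'
      simp only [h0, hm, hcorner] at this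
      omega
    -- Extract the eight corner inequalities and finish with linear arithmetic.
    have hbx := hx.1
    have hbg := (hg x hx).1
    have bx0 := hbx 0; have bx1 := hbx 1; have bx2 := hbx 2
    have bg0 := hbg 0; have bg1 := hbg 1; have bg2 := hbg 2
    have c000 := hle ![false, false, false]
    have c001 := hle ![false, false, true]
    have c010 := hle ![false, true, false]
    have c011 := hle ![false, true, true]
    have c100 := hle ![true, false, false]
    have c101 := hle ![true, false, true]
    have c110 := hle ![true, true, false]
    have c111 := hle ![true, true, true]
    rw [D3_eq, D3_eq] at c000 c001 c010 c011 c100 c101 c110 c111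
    simp only [corner, Matrix.cons_val_zero, Matrix.cons_val_one, Matrix.head_cons,
      Matrix.cons_val_two, Matrix.tail_cons, if_true, if_false, Bool.false_eq_true,
      cond_true, cond_false] at c000 c001 c010 c011 c100 c101 c110 c111
    rw [abs_lo bg0.1, abs_lo bg1.1, abs_lo bg2.1, abs_lo bx0.1, abs_lo bx1.1,
      abs_lo bx2.1] at c000
    rw [abs_lo bg0.1, abs_lo bg1.1, abs_hi bg2.2, abs_lo bx0.1, abs_lo bx1.1,
      abs_hi bx2.2] at c001
    rw [abs_lo bg0.1, abs_hi bg1.2, abs_lo bg2.1, abs_lo bx0.1, abs_hi bx1.2,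
      abs_lo bx2.1] at c010
    rw [abs_lo bg0.1, abs_hi bg1.2, abs_hi bg2.2, abs_lo bx0.1, abs_hi bx1.2,
      abs_hi bx2.2] at c011
    rw [abs_hi bg0.2, abs_lo bg1.1, abs_lo bg2.1, abs_hi bx0.2, abs_lo bx1.1,
      abs_lo bx2.1] at c100
    rw [abs_hi bg0.2, abs_lo bg1.1, abs_hi bg2.2, abs_hi bx0.2, abs_lo bx1.1,
      abs_hi bx2.2] at c101
    rw [abs_hi bg0.2, abs_hi bg1.2, abs_lo bg2.1, abs_hi bx0.2, abs_hi bx1.2,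
      abs_lo bx2.1] at c110
    rw [abs_hi bg0.2, abs_hi bg1.2, abs_hi bg2.2, abs_hi bx0.2, abs_hi bx1.2,
      abs_hi bx2.2] at c111
    have key : g x 0 = x 0 ∧ g x 1 = x 1 ∧ g x 2 = x 2 := by
      refine ⟨by omega, by omega, by omega⟩
    funext i
    fin_cases i
    · exact key.1
    · exact key.2.1
    · exact key.2.2
end

section
/- Let X be a finite digital image in ℤⁿ, A ⊆ X, and 1 ≤ u ≤ n. If f ∈ C(X, c_u) fixes every point of Bd(A), then f fixes every point of A. -/
private def seg {n : ℕ} (x : Fin n → ℤ) (i : Fin n) (ε : ℤ) (s : ℕ) : Fin n → ℤ :=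
  fun j => if j = i then x i + ε * s else x j

private lemma seg_apply {n : ℕ} (x : Fin n → ℤ) (i : Fin n) (ε : ℤ) (s : ℕ) :
    seg x i ε s i = x i + ε * s := by simp [seg]

private lemma seg_zero {n : ℕ} (x : Fin n → ℤ) (i : Fin n) (ε : ℤ) : seg x i ε 0 = x := by
  funext j; by_cases h : j = i <;> simp [seg, h]

private lemma seg_adj {n u : ℕ} (hu : 1 ≤ u) (x : Fin n → ℤ) (i : Fin n) {ε : ℤ}
    (hε : ε = 1 ∨ ε = -1) (s : ℕ) : cAdj n u (seg x i ε s) (seg x i ε (s+1)) := by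
  have hne : (seg x i ε s) i ≠ (seg x i ε (s+1)) i := by
    simp only [seg, if_pos rfl]
    rcases hε with h | h <;> subst h <;> push_cast <;> intro hc <;> omega
  refine ⟨fun h => hne (congrFun h i), ?_, ?_⟩
  · intro j
    by_cases hj : j = i
    · subst hj
      right
      rw [seg_apply, seg_apply]
      have h1 : x j + ε * (s : ℤ) - (x j + ε * ((s : ℕ) + 1 : ℕ)) = -ε := by push_cast; ring
      rw [h1]
      rcases hε with h | h <;> simp [h]
    · left; simp [seg, hj]
  · have hsub : (Finset.univ.filter (fun j => seg x i ε s j ≠ seg x i ε (s+1) j)) ⊆ {i} := by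
      intro j hj
      simp only [Finset.mem_filter, Finset.mem_univ, true_and] at hj
      simp only [Finset.mem_singleton]
      by_contra hji
      exact hj (by simp [seg, hji])
    calc (Finset.univ.filter (fun j => seg x i ε s j ≠ seg x i ε (s+1) j)).card
        ≤ ({i} : Finset (Fin n)).card := Finset.card_le_card hsub
      _ = 1 := Finset.card_singleton i
      _ ≤ u := hu

private lemma coord_lip {n u : ℕ} {a b : Fin n → ℤ} (h : cAdj n u a b) (i : Fin n) :
    |a i - b i| ≤ 1 := by
  rcases h.2.1 i with h' | h'
  · simp [h']
  · omega

private lemma lip {n u : ℕ} (X : Set (Fin n → ℤ)) (f : (Fin n → ℤ) → (Fin n → ℤ))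
    (hf : DigCont (cAdj n u) (cAdj n u) X f) (hu : 1 ≤ u) (x : Fin n → ℤ) (i : Fin n)
    {ε : ℤ} (hε : ε = 1 ∨ ε = -1) :
    ∀ t : ℕ, (∀ s ≤ t, seg x i ε s ∈ X) →
      |f (seg x i ε 0) i - f (seg x i ε t) i| ≤ (t : ℤ) := by
  intro t
  induction t with
  | zero => intro _; simp
  | succ t ih =>
    intro hall
    have h1 := ih (fun s hs => hall s (le_trans hs (Nat.le_succ t)))
    have hadj := seg_adj hu x i hε t
    have hcont := hf _ (hall t (Nat.le_succ t)) _ (hall (t+1) le_rfl) hadj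
    have hstep : |f (seg x i ε t) i - f (seg x i ε (t+1)) i| ≤ 1 := by
      rcases hcont with h | h
      · simp [h]
      · exact coord_lip h i
    have htri := abs_sub_le (f (seg x i ε 0) i) (f (seg x i ε t) i) (f (seg x i ε (t+1)) i)
    push_cast
    push_cast at h1
    linarith

private lemma find_bd {n : ℕ} (A : Set (Fin n → ℤ)) (hA : A.Finite) (x : Fin n → ℤ)
    (hx : x ∈ A) (i : Fin n) {ε : ℤ} (hε : ε = 1 ∨ ε = -1) :
    ∃ t : ℕ, (∀ s ≤ t, seg x i ε s ∈ A) ∧ seg x i ε t ∈ Bd n A := by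
  classical
  have hinj : Function.Injective (fun s : ℕ => seg x i ε s) := by
    intro a b hab
    have h : seg x i ε a i = seg x i ε b i := congrFun hab i
    rw [seg_apply, seg_apply] at h
    rcases hε with h' | h' <;> subst h' <;> omega
  have hnot : ¬ ∀ s : ℕ, seg x i ε s ∈ A := fun hall =>
    (Set.infinite_of_injective_forall_mem hinj hall) hA
  push_neg at hnot
  have hex : ∃ s : ℕ, seg x i ε s ∉ A := hnot
  have spec : seg x i ε (Nat.find hex) ∉ A := Nat.find_spec hex
  have hmin : ∀ s < Nat.find hex, seg x i ε s ∈ A := fun s hs =>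
    not_not.mp (Nat.find_min hex hs)
  have ht0 : Nat.find hex ≠ 0 := by
    intro h
    rw [h, seg_zero] at spec
    exact spec hx
  obtain ⟨t, ht⟩ := Nat.exists_eq_succ_of_ne_zero ht0
  refine ⟨t, fun s hs => hmin s (by omega), ?_⟩
  exact ⟨hmin t (by omega), seg x i ε (t+1), by rw [← Nat.succ_eq_add_one, ← ht]; exact spec,
    seg_adj le_rfl x i hε t⟩

/-- If a c_u-continuous self-map of a finite digital image fixes Bd(A) pointwise,
then it fixes A pointwise. -/
theorem fix_of_fix_bd {n u : ℕ} (hu1 : 1 ≤ u) (hun : u ≤ n)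
    (X : Set (Fin n → ℤ)) (hX : X.Finite) (A : Set (Fin n → ℤ)) (hAX : A ⊆ X)
    (f : (Fin n → ℤ) → (Fin n → ℤ)) (hfX : ∀ x ∈ X, f x ∈ X)
    (hf : DigCont (cAdj n u) (cAdj n u) X f)
    (hfix : ∀ x ∈ Bd n A, f x = x) :
    ∀ x ∈ A, f x = x := by
  intro x hx
  have hAfin := hX.subset hAX
  funext i
  obtain ⟨t₁, hall₁, hbd₁⟩ := find_bd A hAfin x hx i (Or.inl rfl : (1:ℤ) = 1 ∨ (1:ℤ) = -1)
  obtain ⟨t₂, hall₂, hbd₂⟩ := find_bd A hAfin x hx i (Or.inr rfl : (-1:ℤ) = 1 ∨ (-1:ℤ) = -1)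
  have hfix₁ := hfix _ hbd₁
  have hfix₂ := hfix _ hbd₂
  have hl₁ := lip X f hf hu1 x i (Or.inl rfl : (1:ℤ) = 1 ∨ (1:ℤ) = -1) t₁
    (fun s hs => hAX (hall₁ s hs))
  have hl₂ := lip X f hf hu1 x i (Or.inr rfl : (-1:ℤ) = 1 ∨ (-1:ℤ) = -1) t₂
    (fun s hs => hAX (hall₂ s hs))
  rw [seg_zero, hfix₁] at hl₁
  rw [seg_zero, hfix₂] at hl₂
  have e₁ : seg x i 1 t₁ i = x i + t₁ := by simp [seg]
  have e₂ : seg x i (-1) t₂ i = x i - t₂ := by simp [seg]; ring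
  rw [e₁] at hl₁
  rw [e₂] at hl₂
  rw [abs_le] at hl₁ hl₂
  omega
end

section
/- Let X = ∏_{i=1}^{n} [a_i, b_i] ∩ ℤⁿ with b_i > a_i for all i, and let x₀ ∈ X with p_i(x₀) = a_i for some index i. Then the function f : X → X that fixes every point except x₀ and sends x₀ to x₀ + e_i (the point obtained by increasing the i-th coordinate by 1) is c_n-continuous. -/
lemma move_key {n : ℕ} (a b : Fin n → ℤ) (x₀ : Fin n → ℤ) (i : Fin n)
    (hx₀i : x₀ i = a i) (y : Fin n → ℤ) (hy : ∀ j, a j ≤ y j ∧ y j ≤ b j)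
    (hc : ∀ j, x₀ j = y j ∨ |x₀ j - y j| = 1) :
    Function.update x₀ i (x₀ i + 1) = y ∨
      cAdj n n (Function.update x₀ i (x₀ i + 1)) y := by
  have key : ∀ j, Function.update x₀ i (x₀ i + 1) j = y j ∨
      |Function.update x₀ i (x₀ i + 1) j - y j| = 1 := by
    intro j
    by_cases hj : j = i
    · subst hj
      rw [Function.update_self]
      have h1 := (hy j).1
      have hcases : y j = x₀ j ∨ y j = x₀ j + 1 := by
        rcases hc j with h | h
        · exact Or.inl h.symm
        · rcases (abs_eq (by norm_num : (0:ℤ) ≤ 1)).mp h with h | h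
          · exfalso; omega
          · right; omega
      rcases hcases with h | h
      · right; rw [show x₀ j + 1 - y j = 1 by omega]; norm_num
      · left; omega
    · rw [Function.update_of_ne hj]
      exact hc j
  by_cases heq : Function.update x₀ i (x₀ i + 1) = y
  · exact Or.inl heq
  · refine Or.inr ⟨heq, key, ?_⟩
    calc (Finset.univ.filter _).card ≤ Finset.univ.card := Finset.card_filter_le _ _
      _ = n := by simp

/-- The map on a digital cube moving a single boundary point x₀ (with i-th
coordinate a_i) one unit in the i-th coordinate and fixing all other points is
c_n-continuous. -/
theorem move_one_point_cn_continuous {n : ℕ} (a b : Fin n → ℤ) (hab : ∀ i, a i < b i)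
    (X : Set (Fin n → ℤ)) (hX : X = {x | ∀ i, a i ≤ x i ∧ x i ≤ b i})
    (x₀ : Fin n → ℤ) (hx₀ : x₀ ∈ X) (i : Fin n) (hx₀i : x₀ i = a i) :
    DigCont (cAdj n n) (cAdj n n) X
      (fun x => if x = x₀ then Function.update x₀ i (x₀ i + 1) else x) := by
  subst hX
  intro x hx y hy hxy
  obtain ⟨hne, hc, hcard⟩ := hxy
  by_cases hxx : x = x₀ <;> by_cases hyy : y = x₀
  · exact absurd (hxx.trans hyy.symm) hne
  · simp only [if_pos hxx, if_neg hyy]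
    have hc2 : ∀ j, x₀ j = y j ∨ |x₀ j - y j| = 1 := by
      intro j; rw [← hxx]; exact hc j
    exact move_key a b x₀ i hx₀i y hy hc2
  · simp only [if_pos hyy, if_neg hxx]
    have hc2 : ∀ j, x₀ j = x j ∨ |x₀ j - x j| = 1 := by
      intro j; rw [← hyy]
      rcases hc j with h | h
      · exact Or.inl h.symm
      · right; rw [abs_sub_comm] at h; exact h
    rcases move_key a b x₀ i hx₀i x hx hc2 with h | h
    · exact Or.inl h.symm
    · exact Or.inr (cAdj_symm h)
  · simp only [if_neg hxx, if_neg hyy]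
    exact Or.inr ⟨hne, hc, hcard⟩
end

section
/- Let X = ⋃_{i=1}^{m} K_i ⊆ ℤⁿ where each K_i = ∏_{j=1}^{n} [a_{ij}, b_{ij}] ∩ ℤⁿ is a digital cube, m ≥ 1, and X is c_n-connected. Let A = ⋃_{i=1}^{m} Bd(K_i). Then A is a freezing set for (X, c_n). -/
/-- The union of the boundaries of cubes decomposing a c_n-connected image X is a
freezing set for (X, c_n). -/
theorem unionCubes_freezingSet_cn {n m : ℕ} (hm : 1 ≤ m)
    (a b : Fin m → Fin n → ℤ) (hab : ∀ i j, a i j ≤ b i j)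
    (K : Fin m → Set (Fin n → ℤ))
    (hK : ∀ i, K i = {x | ∀ j, a i j ≤ x j ∧ x j ≤ b i j})
    (X : Set (Fin n → ℤ)) (hX : X = ⋃ i, K i)
    (hconn : DigConnected (cAdj n n) X)
    (A : Set (Fin n → ℤ)) (hA : A = ⋃ i, Bd n (K i)) :
    FreezingSet (cAdj n n) X A := by
  constructor
  · rw [hA, hX]
    exact Set.iUnion_mono fun i x hx => hx.1
  · intro g hgX hgc hfix x hxX
    rw [hX] at hxX
    obtain ⟨i, hxi⟩ := Set.mem_iUnion.mp hxX
    have hxi' : ∀ j, a i j ≤ x j ∧ x j ≤ b i j := by rw [hK] at hxi; exact hxi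
    have hKX : ∀ z, z ∈ K i → z ∈ X := fun z hz => hX ▸ Set.mem_iUnion.mpr ⟨i, hz⟩
    have hmem : ∀ (j : Fin n) (c : ℤ), a i j ≤ c → c ≤ b i j →
        Function.update x j c ∈ X := by
      intro j c h1 h2
      apply hKX; rw [hK]
      intro j'
      by_cases h : j' = j
      · subst h; simp [h1, h2]
      · simp only [Function.update_of_ne h]; exact hxi' j'
    have lip : ∀ u ∈ X, ∀ v ∈ X, cAdj n n u v → ∀ j, |g u j - g v j| ≤ 1 := by
      intro u hu v hv h j
      rcases hgc u hu v hv h with h' | h'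
      · rw [h']; simp
      · rcases h'.2.1 j with h'' | h''
        · rw [h'']; simp
        · exact le_of_eq h''
    have adj : ∀ (j : Fin n) (c : ℤ),
        cAdj n n (Function.update x j c) (Function.update x j (c + 1)) := by
      intro j c
      refine ⟨?_, ?_, ?_⟩
      · intro h
        have := congrFun h j
        simp at this
      · intro j'
        by_cases h : j' = j
        · subst h; right; simp
        · left; simp [Function.update_of_ne h]
      · exact le_trans (Finset.card_filter_le _ _) (by simp)
    have chain : ∀ (j : Fin n) (t : ℕ) (c : ℤ), a i j ≤ c → c + t ≤ b i j →
        |g (Function.update x j (c + t)) j - g (Function.update x j c) j| ≤ t := by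
      intro j t
      induction t with
      | zero => intro c _ _; simp
      | succ t ih =>
        intro c h1 h2
        have h2' : c + (t : ℤ) + 1 ≤ b i j := by push_cast at h2 ⊢; omega
        have h3 : a i j ≤ c + 1 := by omega
        have ih' := ih (c + 1) h3 (by omega)
        have step := lip _ (hmem j c h1 (by omega)) _ (hmem j (c + 1) h3 (by omega))
          (adj j c) j
        have tri := abs_sub_le (g (Function.update x j (c + 1 + t)) j)
          (g (Function.update x j (c + 1)) j) (g (Function.update x j c) j)
        rw [abs_sub_comm] at step
        have e : c + ((t : ℕ) + 1 : ℕ) = c + 1 + (t : ℤ) := by push_cast; ring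
        rw [e]
        push_cast
        linarith
    have hbd : ∀ (j : Fin n) (c d : ℤ), a i j ≤ c → c ≤ b i j →
        |c - d| = 1 → (d < a i j ∨ b i j < d) → Function.update x j c ∈ A := by
      intro j c d h1 h2 h3 h4
      have hcd : c ≠ d := by
        intro e; rw [e] at h3; simp at h3
      rw [hA]
      refine Set.mem_iUnion.mpr ⟨i, ⟨?_, Function.update x j d, ?_, ?_, ?_, ?_⟩⟩
      · rw [hK]
        intro j'
        by_cases h : j' = j
        · subst h; simp [h1, h2]
        · simp only [Function.update_of_ne h]; exact hxi' j'
      · rw [hK]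
        intro hcon
        have := hcon j
        simp only [Function.update_self, Set.mem_setOf_eq] at this
        omega
      · intro h
        have := congrFun h j
        simp at this
        exact hcd this
      · intro j'
        by_cases h : j' = j
        · subst h; right; simpa using h3
        · left; simp [Function.update_of_ne h]
      · have hsub : (Finset.univ.filter
            (fun j' => Function.update x j c j' ≠ Function.update x j d j')) ⊆ {j} := by
          intro j' hj'
          simp only [Finset.mem_filter] at hj'
          by_contra hne
          simp only [Finset.mem_singleton] at hne
          exact hj'.2 (by simp [Function.update_of_ne hne])
        calc _ ≤ ({j} : Finset (Fin n)).card := Finset.card_le_card hsub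
        _ = 1 := by simp
    funext j
    obtain ⟨hx1, hx2⟩ := hxi' j
    have hpA : Function.update x j (a i j) ∈ A :=
      hbd j (a i j) (a i j - 1) le_rfl (hab i j)
        (by rw [show a i j - (a i j - 1) = 1 from by ring]; exact abs_one)
        (by omega)
    have hqA : Function.update x j (b i j) ∈ A :=
      hbd j (b i j) (b i j + 1) (hab i j) le_rfl
        (by rw [show b i j - (b i j + 1) = -1 from by ring]; simp)
        (by omega)
    have gp := hfix _ hpA
    have gq := hfix _ hqA
    have c1 := chain j (x j - a i j).toNat (a i j) le_rfl (by omega)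
    have c2 := chain j (b i j - x j).toNat (x j) (hxi' j).1 (by omega)
    rw [show a i j + ((x j - a i j).toNat : ℤ) = x j from by omega,
      Function.update_eq_self, gp, Function.update_self] at c1
    rw [show x j + ((b i j - x j).toNat : ℤ) = b i j from by omega,
      Function.update_eq_self, gq, Function.update_self] at c2
    rcases abs_le.mp c1 with ⟨c1a, c1b⟩
    rcases abs_le.mp c2 with ⟨c2a, c2b⟩
    omega
end
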